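/- arXiv:2012.10077 — 5 statements merged into one kernel-verified Lean document; each statement's English description precedes it below -/
import Mathlib

section
/- Suppose in addition to the assumptions of the K-treatment decomposition theorem that E[Δ^{-1}_{g,t}|𝐃] = Σ_{k=2}^K D^k_{g,t} δ^k_{g,t} for some constants δ^k_{g,t} (no complementarity between treatments 2,...,K). Then β_fe = E[ Σ_{(g,t):D^1_{g,t}=1}(N_{g,t}/N_1) w_{g,t} Δ^1_{g,t}(D^{-1}_{g,t}) + Σ_{k=2}^K Σ_{(g,t):D^k_{g,t}=1}(N_{g,t}/N_1) w_{g,t} δ^k_{g,t} ], with Σ_{(g,t):D^1_{g,t}=1}(N_{g,t}/N_1)w_{g,t}=1 and Σ_{(g,t):D^k_{g,t}=1}(N_{g,t}/N_1)w_{g,t}=0 for every k∈{2,...,K}. -/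
open Finset MeasureTheory ProbabilityTheory

private lemma quad_aux (A B : ℝ) (hA : 0 ≤ A) (h : ∀ c : ℝ, 0 ≤ A * c ^ 2 - 2 * B * c) : B = 0 := by
  have h1 := h (B / (A + 1))
  have hA1 : (0:ℝ) < A + 1 := by linarith
  rw [div_pow, sub_nonneg] at h1
  have h2 : 2 * B * (B / (A + 1)) * (A+1)^2 ≤ A * (B ^ 2 / (A + 1) ^ 2) * (A+1)^2 :=
    mul_le_mul_of_nonneg_right h1 (by positivity)
  have e1 : 2 * B * (B / (A + 1)) * (A+1)^2 = 2 * B^2 * (A+1) := by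
    field_simp
  have e2 : A * (B ^ 2 / (A + 1) ^ 2) * (A+1)^2 = A * B^2 := by
    field_simp
  rw [e1, e2] at h2
  nlinarith [sq_nonneg B]

private lemma foc_sum {ι : Type*} (s : Finset ι) (n r x : ι → ℝ)
    (hn : ∀ i ∈ s, 0 ≤ n i)
    (h : ∀ c : ℝ, ∑ i ∈ s, n i * (r i) ^ 2 ≤ ∑ i ∈ s, n i * (r i - c * x i) ^ 2) :
    ∑ i ∈ s, n i * (r i * x i) = 0 := by
  apply quad_aux (∑ i ∈ s, n i * (x i)^2) _
    (Finset.sum_nonneg fun i hi => mul_nonneg (hn i hi) (sq_nonneg _))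
  intro c
  have h1 := h c
  have expand : ∑ i ∈ s, n i * (r i - c * x i) ^ 2
      = ∑ i ∈ s, n i * (r i)^2 - (∑ i ∈ s, n i * (r i * x i)) * (2*c)
        + (∑ i ∈ s, n i * (x i)^2) * c^2 := by
    rw [Finset.sum_mul, Finset.sum_mul, ← Finset.sum_sub_distrib, ← Finset.sum_add_distrib]
    exact Finset.sum_congr rfl fun i _ => by ring
  rw [expand] at h1
  nlinarith

/-- Corollary 2. Under the assumptions of the K-treatment TWFE
decomposition theorem, if in addition `E[Δ^{-1}_{g,t}|𝐃] = Σ_k D^k_{g,t}δ^k_{g,t}`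
for constants `δ^k_{g,t}` (no complementarity between treatments 2,...,K), then
`β_fe = E[Σ_{D¹=1}(N/N₁)wΔ¹ + Σ_k Σ_{D^k=1}(N/N₁)wδ^k]`, the weights on the
own-treatment effects sum to one, and for every `k` the weights on the `δ^k`
terms sum to zero. -/
theorem twfe_decomposition_no_complementarity
    (G T K : ℕ) (hT : 1 ≤ T) (hK : 2 ≤ K)
    {Ω : Type} [inst : MeasurableSpace Ω]
    (μ : Measure Ω) [IsProbabilityMeasure μ]
    (po : Fin G → ℕ → Bool → (Fin (K - 1) → Bool) → Ω → ℝ)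
    (hpomeas : ∀ g t d dm, Measurable (po g t d dm))
    (hpoint : ∀ g t d dm, Integrable (po g t d dm) μ)
    (D1 : Fin G → ℕ → Ω → Bool)
    (Dm1 : Fin G → ℕ → Ω → Fin (K - 1) → Bool)
    (hD1meas : ∀ g t, Measurable (D1 g t))
    (hDm1meas : ∀ g t, Measurable (Dm1 g t))
    (Y : Fin G → ℕ → Ω → ℝ)
    (hY : ∀ g t ω, Y g t ω = po g t (D1 g t ω) (Dm1 g t ω) ω)
    (mD : MeasurableSpace Ω)
    (hmD : mD = MeasurableSpace.comap
      (fun ω => fun (g : Fin G) (t : ℕ) => (D1 g t ω, Dm1 g t ω)) inferInstance)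
    (mDg : Fin G → MeasurableSpace Ω)
    (hmDg : ∀ g, mDg g = MeasurableSpace.comap
      (fun ω => fun (t : ℕ) => (D1 g t ω, Dm1 g t ω)) inferInstance)
    -- independent groups
    (hindep : iIndepFun
      (fun (g : Fin G) (ω : Ω) =>
        ((fun (t : ℕ) => (D1 g t ω, Dm1 g t ω)),
         (fun (t : ℕ) (d : Bool) (dm : Fin (K - 1) → Bool) => po g t d dm ω))) μ)
    -- strong exogeneity of the never-treated outcome
    (hexo : ∀ g t, 2 ≤ t → t ≤ T →
      μ[fun ω => po g t false (fun _ => false) ω -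
          po g (t - 1) false (fun _ => false) ω | mDg g]
        =ᵐ[μ] fun _ => ∫ ω, (po g t false (fun _ => false) ω -
          po g (t - 1) false (fun _ => false) ω) ∂μ)
    -- common trends of the never-treated outcome
    (hct : ∀ g g' t, 2 ≤ t → t ≤ T →
      ∫ ω, (po g t false (fun _ => false) ω -
        po g (t - 1) false (fun _ => false) ω) ∂μ =
      ∫ ω, (po g' t false (fun _ => false) ω -
        po g' (t - 1) false (fun _ => false) ω) ∂μ)
    -- weights (number of observations per cell), balanced panel
    (N : Fin G → ℕ → ℝ) (hN : ∀ g t, 0 < N g t)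
    -- real-valued treatments
    (d1R : Fin G → ℕ → Ω → ℝ) (dmR : Fin (K - 1) → Fin G → ℕ → Ω → ℝ)
    (hd1R : ∀ g t ω, d1R g t ω = if D1 g t ω then 1 else 0)
    (hdmR : ∀ k g t ω, dmR k g t ω = if Dm1 g t ω k then 1 else 0)
    -- the TWFE regression: realization-by-realization weighted least squares
    (βhat αhat : Ω → ℝ) (γhat : Ω → Fin G → ℝ) (νhat : Ω → ℕ → ℝ)
    (ζhat : Ω → Fin (K - 1) → ℝ)
    (hreg : ∀ ω, ∀ (α' β' : ℝ) (γ' : Fin G → ℝ) (ν' : ℕ → ℝ)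
        (ζ' : Fin (K - 1) → ℝ),
      ∑ g, ∑ t ∈ Finset.Icc 1 T, N g t * (Y g t ω - αhat ω - γhat ω g - νhat ω t
        - βhat ω * d1R g t ω - ∑ k, ζhat ω k * dmR k g t ω) ^ 2 ≤
      ∑ g, ∑ t ∈ Finset.Icc 1 T, N g t * (Y g t ω - α' - γ' g - ν' t
        - β' * d1R g t ω - ∑ k, ζ' k * dmR k g t ω) ^ 2)
    -- first-stage regression of D¹ on the other regressors, and its residual ε
    (a0 : Ω → ℝ) (c0 : Ω → Fin G → ℝ) (v0 : Ω → ℕ → ℝ) (z0 : Ω → Fin (K - 1) → ℝ)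
    (hfs : ∀ ω, ∀ (a' : ℝ) (c' : Fin G → ℝ) (v' : ℕ → ℝ) (z' : Fin (K - 1) → ℝ),
      ∑ g, ∑ t ∈ Finset.Icc 1 T, N g t * (d1R g t ω - a0 ω - c0 ω g - v0 ω t
        - ∑ k, z0 ω k * dmR k g t ω) ^ 2 ≤
      ∑ g, ∑ t ∈ Finset.Icc 1 T, N g t * (d1R g t ω - a' - c' g - v' t
        - ∑ k, z' k * dmR k g t ω) ^ 2)
    (ε : Ω → Fin G → ℕ → ℝ)
    (hε : ∀ ω g t, ε ω g t = d1R g t ω - a0 ω - c0 ω g - v0 ω t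
      - ∑ k, z0 ω k * dmR k g t ω)
    -- number of treated observations, and the normalization of the weights
    (N1 : Ω → ℝ) (hN1 : ∀ ω, N1 ω = ∑ g, ∑ t ∈ Finset.Icc 1 T, N g t * d1R g t ω)
    (hN1pos : ∀ ω, 0 < N1 ω)
    (εbar : Ω → ℝ)
    (hεbar : ∀ ω, εbar ω =
      ∑ g, ∑ t ∈ Finset.Icc 1 T, N g t / N1 ω * d1R g t ω * ε ω g t)
    (hεbarne : ∀ ω, εbar ω ≠ 0)  -- no collinearity
    (w : Ω → Fin G → ℕ → ℝ) (hw : ∀ ω g t, w ω g t = ε ω g t / εbar ω)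
    -- treatment effects
    (Δ1 Δm : Fin G → ℕ → Ω → ℝ)
    (hΔ1 : ∀ g t ω, Δ1 g t ω =
      po g t true (Dm1 g t ω) ω - po g t false (Dm1 g t ω) ω)
    (hΔm : ∀ g t ω, Δm g t ω =
      po g t false (Dm1 g t ω) ω - po g t false (fun _ => false) ω)
    -- no complementarity between the other treatments
    (δk : Fin (K - 1) → Fin G → ℕ → ℝ)
    (hadd : ∀ g t, 1 ≤ t → t ≤ T →
      μ[Δm g t | mD] =ᵐ[μ] fun ω => ∑ k, dmR k g t ω * δk k g t)
    -- the decomposition's right-hand side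
    (RHS : Ω → ℝ)
    (hRHS : ∀ ω, RHS ω = (∑ g, ∑ t ∈ Finset.Icc 1 T,
        d1R g t ω * (N g t / N1 ω) * w ω g t * Δ1 g t ω)
      + ∑ k, ∑ g, ∑ t ∈ Finset.Icc 1 T,
        dmR k g t ω * (N g t / N1 ω) * w ω g t * δk k g t)
    (hβint : Integrable βhat μ) (hRHSint : Integrable RHS μ) :
    (∫ ω, βhat ω ∂μ = ∫ ω, RHS ω ∂μ) ∧
    (∀ ω, ∑ g, ∑ t ∈ Finset.Icc 1 T, d1R g t ω * (N g t / N1 ω) * w ω g t = 1) ∧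
    ∀ k ω, ∑ g, ∑ t ∈ Finset.Icc 1 T,
      dmR k g t ω * (N g t / N1 ω) * w ω g t = 0 := by
    classical
  -- generic first-order condition for the first-stage regression
  have hsum_aux : ∀ ω (c : ℝ) (z' : Fin (K-1) → ℝ) g t,
      ∑ k, (z0 ω k + c * z' k) * dmR k g t ω
        = (∑ k, z0 ω k * dmR k g t ω) + c * (∑ k, z' k * dmR k g t ω) := by
    intro ω c z' g t
    rw [Finset.mul_sum, ← Finset.sum_add_distrib]
    exact Finset.sum_congr rfl fun k _ => by ring
  have focV : ∀ ω (a' : ℝ) (c' : Fin G → ℝ) (v' : ℕ → ℝ) (z' : Fin (K-1) → ℝ),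
      ∑ g, ∑ t ∈ Finset.Icc 1 T, N g t * (ε ω g t *
        (a' + c' g + v' t + ∑ k, z' k * dmR k g t ω)) = 0 := by
    intro ω a' c' v' z'
    have h0 : ∑ g, ∑ t ∈ Finset.Icc 1 T, N g t * (ε ω g t *
        (a' + c' g + v' t + ∑ k, z' k * dmR k g t ω))
        = ∑ p ∈ Finset.univ ×ˢ Finset.Icc 1 T, N p.1 p.2 * (ε ω p.1 p.2 *
        (a' + c' p.1 + v' p.2 + ∑ k, z' k * dmR k p.1 p.2 ω)) :=
      (Finset.sum_product' ..).symm
    rw [h0]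
    apply foc_sum _ _ _ _ (fun p _ => (hN p.1 p.2).le)
    intro c
    have h1 := hfs ω (a0 ω + c * a') (fun g => c0 ω g + c * c' g)
      (fun t => v0 ω t + c * v' t) (fun k => z0 ω k + c * z' k)
    have e1 : ∀ (g : Fin G), ∀ t ∈ Finset.Icc 1 T,
        N g t * (d1R g t ω - a0 ω - c0 ω g - v0 ω t - ∑ k, z0 ω k * dmR k g t ω) ^ 2
        = N g t * (ε ω g t) ^ 2 := by
      intro g t _; rw [hε]
    have e2 : ∀ (g : Fin G), ∀ t ∈ Finset.Icc 1 T,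
        N g t * (d1R g t ω - (a0 ω + c * a') - (c0 ω g + c * c' g) - (v0 ω t + c * v' t)
          - ∑ k, (z0 ω k + c * z' k) * dmR k g t ω) ^ 2
        = N g t * (ε ω g t - c * (a' + c' g + v' t + ∑ k, z' k * dmR k g t ω)) ^ 2 := by
      intro g t _; rw [hsum_aux, hε]; ring
    rw [Finset.sum_congr rfl (fun g _ => Finset.sum_congr rfl (e1 g)),
        Finset.sum_congr rfl (fun g _ => Finset.sum_congr rfl (e2 g))] at h1
    rw [Finset.sum_product' (f := fun g t => N g t * (ε ω g t) ^ 2),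
        Finset.sum_product' (f := fun g t => N g t *
          (ε ω g t - c * (a' + c' g + v' t + ∑ k, z' k * dmR k g t ω)) ^ 2)]
    exact h1
  -- residual of the main regression
  set u : Ω → Fin G → ℕ → ℝ := fun ω g t => Y g t ω - αhat ω - γhat ω g - νhat ω t
      - βhat ω * d1R g t ω - ∑ k, ζhat ω k * dmR k g t ω with hu
  have hsum_aux2 : ∀ ω (c : ℝ) (z' : Fin (K-1) → ℝ) g t,
      ∑ k, (ζhat ω k + c * z' k) * dmR k g t ω
        = (∑ k, ζhat ω k * dmR k g t ω) + c * (∑ k, z' k * dmR k g t ω) := by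
    intro ω c z' g t
    rw [Finset.mul_sum, ← Finset.sum_add_distrib]
    exact Finset.sum_congr rfl fun k _ => by ring
  have focU : ∀ ω (b' a' : ℝ) (c' : Fin G → ℝ) (v' : ℕ → ℝ) (z' : Fin (K-1) → ℝ),
      ∑ g, ∑ t ∈ Finset.Icc 1 T, N g t * (u ω g t *
        (b' * d1R g t ω + a' + c' g + v' t + ∑ k, z' k * dmR k g t ω)) = 0 := by
    intro ω b' a' c' v' z'
    have h0 : ∑ g, ∑ t ∈ Finset.Icc 1 T, N g t * (u ω g t *
        (b' * d1R g t ω + a' + c' g + v' t + ∑ k, z' k * dmR k g t ω))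
        = ∑ p ∈ Finset.univ ×ˢ Finset.Icc 1 T, N p.1 p.2 * (u ω p.1 p.2 *
        (b' * d1R p.1 p.2 ω + a' + c' p.1 + v' p.2 + ∑ k, z' k * dmR k p.1 p.2 ω)) :=
      (Finset.sum_product' ..).symm
    rw [h0]
    apply foc_sum _ _ _ _ (fun p _ => (hN p.1 p.2).le)
    intro c
    have h1 := hreg ω (αhat ω + c * a') (βhat ω + c * b') (fun g => γhat ω g + c * c' g)
      (fun t => νhat ω t + c * v' t) (fun k => ζhat ω k + c * z' k)
    have e2 : ∀ (g : Fin G), ∀ t ∈ Finset.Icc 1 T,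
        N g t * (Y g t ω - (αhat ω + c * a') - (γhat ω g + c * c' g) - (νhat ω t + c * v' t)
          - (βhat ω + c * b') * d1R g t ω - ∑ k, (ζhat ω k + c * z' k) * dmR k g t ω) ^ 2
        = N g t * (u ω g t - c * (b' * d1R g t ω + a' + c' g + v' t
            + ∑ k, z' k * dmR k g t ω)) ^ 2 := by
      intro g t _; rw [hsum_aux2, hu]; ring
    rw [Finset.sum_congr rfl (fun g _ => Finset.sum_congr rfl (e2 g))] at h1
    rw [Finset.sum_product' (f := fun g t => N g t * (u ω g t) ^ 2),
        Finset.sum_product' (f := fun g t => N g t * (u ω g t - c * (b' * d1R g t ω + a'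
          + c' g + v' t + ∑ k, z' k * dmR k g t ω)) ^ 2)]
    exact h1
  -- specific first-order conditions
  have hF1 : ∀ ω g₀, ∑ t ∈ Finset.Icc 1 T, N g₀ t * ε ω g₀ t = 0 := by
    intro ω g₀
    have h := focV ω 0 (fun g => if g = g₀ then 1 else 0) (fun _ => 0) (fun _ => 0)
    simp only [zero_add, add_zero, zero_mul, Finset.sum_const_zero, mul_ite, mul_one,
      mul_zero, ite_mul] at h
    rw [Finset.sum_congr rfl (fun g (_ : g ∈ Finset.univ) =>
      (by split <;> simp :
        (∑ t ∈ Finset.Icc 1 T, if g = g₀ then N g t * ε ω g t else 0)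
        = if g = g₀ then ∑ t ∈ Finset.Icc 1 T, N g t * ε ω g t else 0))] at h
    rwa [Finset.sum_ite_eq' Finset.univ g₀, if_pos (Finset.mem_univ _)] at h
  have hF2 : ∀ ω t₀, t₀ ∈ Finset.Icc 1 T → ∑ g, N g t₀ * ε ω g t₀ = 0 := by
    intro ω t₀ ht₀
    have h := focV ω 0 (fun _ => 0) (fun t => if t = t₀ then 1 else 0) (fun _ => 0)
    simp only [zero_add, add_zero, zero_mul, Finset.sum_const_zero, mul_ite, mul_one,
      mul_zero, ite_mul] at h
    rw [Finset.sum_congr rfl (fun g (_ : g ∈ Finset.univ) =>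
      (Finset.sum_ite_eq' (Finset.Icc 1 T) t₀ (fun t => N g t * ε ω g t)))] at h
    simp only [ht₀, if_true] at h
    exact h
  have hF3 : ∀ ω k₀, ∑ g, ∑ t ∈ Finset.Icc 1 T, N g t * (ε ω g t * dmR k₀ g t ω) = 0 := by
    intro ω k₀
    have h := focV ω 0 (fun _ => 0) (fun _ => 0) (fun k => if k = k₀ then 1 else 0)
    simp only [zero_add, ite_mul, one_mul, zero_mul, Finset.sum_ite_eq',
      Finset.mem_univ, if_true] at h
    exact h
  -- Claim 2: weights on own-treatment sum to one
  have claim2 : ∀ ω, ∑ g, ∑ t ∈ Finset.Icc 1 T,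
      d1R g t ω * (N g t / N1 ω) * w ω g t = 1 := by
    intro ω
    have e : ∑ g, ∑ t ∈ Finset.Icc 1 T, d1R g t ω * (N g t / N1 ω) * w ω g t
        = (∑ g, ∑ t ∈ Finset.Icc 1 T, N g t / N1 ω * d1R g t ω * ε ω g t) / εbar ω := by
      rw [Finset.sum_div]
      refine Finset.sum_congr rfl fun g _ => ?_
      rw [Finset.sum_div]
      refine Finset.sum_congr rfl fun t _ => ?_
      rw [hw]; ring
    rw [e, ← hεbar, div_self (hεbarne ω)]
  -- Claim 3: weights on the other treatments sum to zero
  have claim3 : ∀ k ω, ∑ g, ∑ t ∈ Finset.Icc 1 T,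
      dmR k g t ω * (N g t / N1 ω) * w ω g t = 0 := by
    intro k ω
    have e : ∑ g, ∑ t ∈ Finset.Icc 1 T, dmR k g t ω * (N g t / N1 ω) * w ω g t
        = (∑ g, ∑ t ∈ Finset.Icc 1 T, N g t * (ε ω g t * dmR k g t ω)) / (N1 ω * εbar ω) := by
      rw [Finset.sum_div]
      refine Finset.sum_congr rfl fun g _ => ?_
      rw [Finset.sum_div]
      refine Finset.sum_congr rfl fun t _ => ?_
      rw [hw]; ring
    rw [e, hF3, zero_div]
  -- the weights (N/N1)·w sum to zero within each group and each period
  have hwsum1 : ∀ ω g, ∑ t ∈ Finset.Icc 1 T, N g t / N1 ω * w ω g t = 0 := by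
    intro ω g
    have e : ∑ t ∈ Finset.Icc 1 T, N g t / N1 ω * w ω g t
        = (∑ t ∈ Finset.Icc 1 T, N g t * ε ω g t) / (N1 ω * εbar ω) := by
      rw [Finset.sum_div]
      refine Finset.sum_congr rfl fun t _ => ?_
      rw [hw]; ring
    rw [e, hF1, zero_div]
  have hwsum2 : ∀ ω t, t ∈ Finset.Icc 1 T → ∑ g, N g t / N1 ω * w ω g t = 0 := by
    intro ω t ht
    have e : ∑ g, N g t / N1 ω * w ω g t
        = (∑ g, N g t * ε ω g t) / (N1 ω * εbar ω) := by
      rw [Finset.sum_div]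
      refine Finset.sum_congr rfl fun g _ => ?_
      rw [hw]; ring
    rw [e, hF2 ω t ht, zero_div]
  -- pointwise formula for βhat
  have hNεd : ∀ ω, ∑ g, ∑ t ∈ Finset.Icc 1 T, N g t * (ε ω g t * d1R g t ω)
      = N1 ω * εbar ω := by
    intro ω
    rw [hεbar ω, Finset.mul_sum]
    refine Finset.sum_congr rfl fun g _ => ?_
    rw [Finset.mul_sum]
    refine Finset.sum_congr rfl fun t _ => ?_
    field_simp [(hN1pos ω).ne']
  have hβw : ∀ ω, βhat ω = ∑ g, ∑ t ∈ Finset.Icc 1 T,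
      N g t / N1 ω * w ω g t * Y g t ω := by
    intro ω
    have hEu : ∑ g, ∑ t ∈ Finset.Icc 1 T, N g t * (u ω g t * ε ω g t) = 0 := by
      have h := focU ω 1 (-a0 ω) (fun g => -c0 ω g) (fun t => -v0 ω t) (fun k => -z0 ω k)
      rw [Finset.sum_congr rfl (fun g (_ : g ∈ Finset.univ) => Finset.sum_congr rfl
        (fun t (_ : t ∈ Finset.Icc 1 T) => (by
          rw [hε]
          have : ∑ k, -z0 ω k * dmR k g t ω = -∑ k, z0 ω k * dmR k g t ω := by
            rw [← Finset.sum_neg_distrib]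
            exact Finset.sum_congr rfl fun k _ => by ring
          rw [this]; ring :
          N g t * (u ω g t * ((1:ℝ) * d1R g t ω + -a0 ω + -c0 ω g + -v0 ω t
            + ∑ k, -z0 ω k * dmR k g t ω)) = N g t * (u ω g t * ε ω g t))))] at h
      exact h
    have hkey : ∑ g, ∑ t ∈ Finset.Icc 1 T, N g t * (ε ω g t * Y g t ω)
        = βhat ω * (N1 ω * εbar ω) := by
      have split : ∀ (g : Fin G), ∀ t ∈ Finset.Icc 1 T,
          N g t * (ε ω g t * Y g t ω)
          = N g t * (u ω g t * ε ω g t) + βhat ω * (N g t * (ε ω g t * d1R g t ω))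
            + N g t * (ε ω g t * (αhat ω + γhat ω g + νhat ω t
              + ∑ k, ζhat ω k * dmR k g t ω)) := by
        intro g t _
        simp only [hu]
        ring
      rw [Finset.sum_congr rfl (fun g _ => Finset.sum_congr rfl (split g))]
      have e1 : ∀ (g : Fin G), ∑ t ∈ Finset.Icc 1 T,
          (N g t * (u ω g t * ε ω g t) + βhat ω * (N g t * (ε ω g t * d1R g t ω))
            + N g t * (ε ω g t * (αhat ω + γhat ω g + νhat ω t
              + ∑ k, ζhat ω k * dmR k g t ω)))
          = (∑ t ∈ Finset.Icc 1 T, N g t * (u ω g t * ε ω g t))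
            + βhat ω * (∑ t ∈ Finset.Icc 1 T, N g t * (ε ω g t * d1R g t ω))
            + ∑ t ∈ Finset.Icc 1 T, N g t * (ε ω g t * (αhat ω + γhat ω g + νhat ω t
              + ∑ k, ζhat ω k * dmR k g t ω)) := by
        intro g
        rw [Finset.sum_add_distrib, Finset.sum_add_distrib, Finset.mul_sum]
      rw [Finset.sum_congr rfl (fun g _ => e1 g), Finset.sum_add_distrib,
        Finset.sum_add_distrib, ← Finset.mul_sum, hEu, hNεd, focV ω (αhat ω) (γhat ω)
          (νhat ω) (ζhat ω)]
      ring
    have e2 : ∑ g, ∑ t ∈ Finset.Icc 1 T, N g t / N1 ω * w ω g t * Y g t ω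
        = (∑ g, ∑ t ∈ Finset.Icc 1 T, N g t * (ε ω g t * Y g t ω)) / (N1 ω * εbar ω) := by
      rw [Finset.sum_div]
      refine Finset.sum_congr rfl fun g _ => ?_
      rw [Finset.sum_div]
      refine Finset.sum_congr rfl fun t _ => ?_
      rw [hw]; ring
    rw [e2, hkey, mul_div_cancel_right₀ _ (mul_ne_zero (hN1pos ω).ne' (hεbarne ω))]
  -- uniqueness of the first-stage residuals given the design
  have hεeq : ∀ ω ω', (∀ g, ∀ t ∈ Finset.Icc 1 T, d1R g t ω = d1R g t ω') →
      (∀ k g, ∀ t ∈ Finset.Icc 1 T, dmR k g t ω = dmR k g t ω') →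
      ∀ g, ∀ t ∈ Finset.Icc 1 T, ε ω g t = ε ω' g t := by
    intro ω ω' hd hdm
    have hX : ∀ g, ∀ t ∈ Finset.Icc 1 T, ε ω g t - ε ω' g t
        = (a0 ω' - a0 ω) + (c0 ω' g - c0 ω g) + (v0 ω' t - v0 ω t)
          + ∑ k, (z0 ω' k - z0 ω k) * dmR k g t ω := by
      intro g t ht
      rw [hε, hε, hd g t ht]
      have e : ∑ k, (z0 ω' k - z0 ω k) * dmR k g t ω
          = (∑ k, z0 ω' k * dmR k g t ω) - ∑ k, z0 ω k * dmR k g t ω := by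
        rw [← Finset.sum_sub_distrib]
        exact Finset.sum_congr rfl fun k _ => by ring
      rw [e]
      have e2 : ∑ k, z0 ω' k * dmR k g t ω = ∑ k, z0 ω' k * dmR k g t ω' :=
        Finset.sum_congr rfl fun k _ => by rw [hdm k g t ht]
      rw [e2]; ring
    have hzero : ∑ g, ∑ t ∈ Finset.Icc 1 T, N g t * (ε ω g t - ε ω' g t) ^ 2 = 0 := by
      have e : ∀ g, ∀ t ∈ Finset.Icc 1 T, N g t * (ε ω g t - ε ω' g t) ^ 2
          = N g t * (ε ω g t * ((a0 ω' - a0 ω) + (c0 ω' g - c0 ω g) + (v0 ω' t - v0 ω t)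
              + ∑ k, (z0 ω' k - z0 ω k) * dmR k g t ω))
            - N g t * (ε ω' g t * ((a0 ω' - a0 ω) + (c0 ω' g - c0 ω g) + (v0 ω' t - v0 ω t)
              + ∑ k, (z0 ω' k - z0 ω k) * dmR k g t ω')) := by
        intro g t ht
        have h1 := hX g t ht
        have h2 : ∑ k, (z0 ω' k - z0 ω k) * dmR k g t ω
            = ∑ k, (z0 ω' k - z0 ω k) * dmR k g t ω' :=
          Finset.sum_congr rfl fun k _ => by rw [hdm k g t ht]
        rw [← h2, ← h1]
        ring
      rw [Finset.sum_congr rfl (fun g _ => Finset.sum_congr rfl (e g))]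
      rw [Finset.sum_congr rfl (fun g (_ : g ∈ Finset.univ) =>
        Finset.sum_sub_distrib (s := Finset.Icc 1 T) _ _), Finset.sum_sub_distrib,
        focV ω (a0 ω' - a0 ω) (fun g => c0 ω' g - c0 ω g) (fun t => v0 ω' t - v0 ω t)
          (fun k => z0 ω' k - z0 ω k),
        focV ω' (a0 ω' - a0 ω) (fun g => c0 ω' g - c0 ω g) (fun t => v0 ω' t - v0 ω t)
          (fun k => z0 ω' k - z0 ω k), sub_zero]
    intro g t ht
    have hnn : ∀ g ∈ Finset.univ (α := Fin G),
        0 ≤ ∑ t ∈ Finset.Icc 1 T, N g t * (ε ω g t - ε ω' g t) ^ 2 :=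
      fun g _ => Finset.sum_nonneg fun t _ => mul_nonneg (hN g t).le (sq_nonneg _)
    have h1 := (Finset.sum_eq_zero_iff_of_nonneg hnn).mp hzero g (Finset.mem_univ g)
    have h2 := (Finset.sum_eq_zero_iff_of_nonneg
      (fun t _ => mul_nonneg (hN g t).le (sq_nonneg _))).mp h1 t ht
    have h4 : (ε ω g t - ε ω' g t) ^ 2 = 0 :=
      (mul_eq_zero.mp h2).resolve_left (hN g t).ne'
    have h5 : ε ω g t - ε ω' g t = 0 := by
      have := sq_eq_zero_iff.mp h4
      exact this
    linarith
  letI : MeasurableSpace Ω := inst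
  -- atoms of the design σ-algebra
  set A : (Fin G → Fin (T+1) → Bool × (Fin (K-1) → Bool)) → Fin G → Set Ω :=
    fun q g => {ω | ∀ t : Fin (T+1), (D1 g (t:ℕ) ω, Dm1 g (t:ℕ) ω) = q g t} with hA
  set B : (Fin G → Fin (T+1) → Bool × (Fin (K-1) → Bool)) → Set Ω :=
    fun q => ⋂ g, A q g with hB
  have hAdef : ∀ q g, A q g = ⋂ t : Fin (T+1),
      (fun ω => (D1 g (t:ℕ) ω, Dm1 g (t:ℕ) ω)) ⁻¹' {q g t} := by
    intro q g
    ext ω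
    simp [hA, Set.mem_iInter]
  have hAmeas : ∀ q g, MeasurableSet[inst] (A q g) := by
    intro q g
    rw [hAdef]
    exact MeasurableSet.iInter fun t =>
      ((hD1meas g t).prodMk (hDm1meas g t)) (measurableSet_singleton _)
  have hBmeas : ∀ q, MeasurableSet[inst] (B q) := fun q => MeasurableSet.iInter fun g => hAmeas q g
  have hmDle : mD ≤ inst := by
    rw [hmD]
    exact Measurable.comap_le (measurable_pi_lambda _ fun g =>
      measurable_pi_lambda _ fun t => (hD1meas g t).prodMk (hDm1meas g t))
  have hmDgle : ∀ g, mDg g ≤ inst := by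
    intro g
    rw [hmDg]
    exact Measurable.comap_le (measurable_pi_lambda _ fun t =>
      (hD1meas g t).prodMk (hDm1meas g t))
  have hBmD : ∀ q, MeasurableSet[mD] (B q) := by
    intro q
    rw [hmD]
    rw [MeasurableSpace.measurableSet_comap]
    refine ⟨⋂ g, ⋂ t : Fin (T+1), (fun f : Fin G → ℕ → Bool × (Fin (K-1) → Bool)
      => f g (t:ℕ)) ⁻¹' {q g t}, ?_, ?_⟩
    · exact MeasurableSet.iInter fun g => MeasurableSet.iInter fun t =>
        ((measurable_pi_apply ((t:ℕ))).comp (measurable_pi_apply g)) (measurableSet_singleton _)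
    · ext ω
      simp [hB, hA, Set.mem_iInter]
  have hAmDg : ∀ q g, MeasurableSet[mDg g] (A q g) := by
    intro q g
    rw [hmDg]
    rw [MeasurableSpace.measurableSet_comap]
    refine ⟨⋂ t : Fin (T+1), (fun f : ℕ → Bool × (Fin (K-1) → Bool)
      => f (t:ℕ)) ⁻¹' {q g t}, ?_, ?_⟩
    · exact MeasurableSet.iInter fun t =>
        (measurable_pi_apply ((t:ℕ))) (measurableSet_singleton _)
    · ext ω
      simp [hA, Set.mem_iInter]
  -- constancy of the design on atoms
  have hD1c : ∀ q g t (h : t < T+1), ∀ ω ∈ B q, D1 g t ω = (q g ⟨t, h⟩).1 := by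
    intro q g t h ω hω
    have := (Set.mem_iInter.mp hω g) ⟨t, h⟩
    exact congrArg Prod.fst this
  have hDm1c : ∀ q g t (h : t < T+1), ∀ ω ∈ B q, Dm1 g t ω = (q g ⟨t, h⟩).2 := by
    intro q g t h ω hω
    have := (Set.mem_iInter.mp hω g) ⟨t, h⟩
    exact congrArg Prod.snd this
  have hTlt : ∀ t ∈ Finset.Icc 1 T, t < T + 1 :=
    fun t ht => Nat.lt_succ_of_le (Finset.mem_Icc.mp ht).2
  -- splitting integrals over atoms
  have hcover : ⋃ q, B q = Set.univ := by
    ext ω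
    simp only [Set.mem_iUnion, Set.mem_univ, iff_true]
    refine ⟨fun g t => (D1 g (t:ℕ) ω, Dm1 g (t:ℕ) ω), ?_⟩
    simp [hB, hA, Set.mem_iInter]
  have hdisj : Pairwise (Function.onFun Disjoint B) := by
    intro q q' hne
    rw [Function.onFun, Set.disjoint_left]
    intro ω hω hω'
    apply hne
    funext g t
    have h1 := (Set.mem_iInter.mp hω g) t
    have h2 := (Set.mem_iInter.mp hω' g) t
    rw [← h1, h2]
  have hsplit : ∀ f : Ω → ℝ, Integrable f μ →
      ∫ ω, f ω ∂μ = ∑ q, ∫ ω in B q, f ω ∂μ := by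
    intro f hf
    rw [← setIntegral_univ, ← hcover,
      integral_iUnion_fintype hBmeas hdisj (fun q => hf.integrableOn)]
  refine ⟨?_, claim2, claim3⟩
  rw [hsplit βhat hβint, hsplit RHS hRHSint]
  refine Finset.sum_congr rfl fun q _ => ?_
  rcases Set.eq_empty_or_nonempty (B q) with hq | hqne
  · rw [hq, setIntegral_empty, setIntegral_empty]
  obtain ⟨ω₀, hω₀⟩ := hqne
  have hd1c : ∀ g, ∀ t ∈ Finset.Icc 1 T, ∀ ω ∈ B q, d1R g t ω = d1R g t ω₀ := by
    intro g t ht ω hω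
    rw [hd1R, hd1R, hD1c q g t (hTlt t ht) ω hω, hD1c q g t (hTlt t ht) ω₀ hω₀]
  have hDm1cc : ∀ g, ∀ t ∈ Finset.Icc 1 T, ∀ ω ∈ B q, Dm1 g t ω = Dm1 g t ω₀ := by
    intro g t ht ω hω
    rw [hDm1c q g t (hTlt t ht) ω hω, hDm1c q g t (hTlt t ht) ω₀ hω₀]
  have hdmc : ∀ k g, ∀ t ∈ Finset.Icc 1 T, ∀ ω ∈ B q, dmR k g t ω = dmR k g t ω₀ := by
    intro k g t ht ω hω
    rw [hdmR, hdmR, hDm1cc g t ht ω hω]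
  have hN1c : ∀ ω ∈ B q, N1 ω = N1 ω₀ := by
    intro ω hω
    rw [hN1, hN1]
    exact Finset.sum_congr rfl fun g _ => Finset.sum_congr rfl fun t ht => by
      rw [hd1c g t ht ω hω]
  have hεc : ∀ ω ∈ B q, ∀ g, ∀ t ∈ Finset.Icc 1 T, ε ω g t = ε ω₀ g t := by
    intro ω hω
    exact hεeq ω ω₀ (fun g t ht => hd1c g t ht ω hω) (fun k g t ht => hdmc k g t ht ω hω)
  have hεbarc : ∀ ω ∈ B q, εbar ω = εbar ω₀ := by
    intro ω hω
    rw [hεbar, hεbar]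
    refine Finset.sum_congr rfl fun g _ => Finset.sum_congr rfl fun t ht => by
      rw [hd1c g t ht ω hω, hεc ω hω g t ht, hN1c ω hω]
  have hwc : ∀ ω ∈ B q, ∀ g, ∀ t ∈ Finset.Icc 1 T, w ω g t = w ω₀ g t := by
    intro ω hω g t ht
    rw [hw, hw, hεc ω hω g t ht, hεbarc ω hω]
  set V : Fin G → Ω → (ℕ → Bool × (Fin (K-1) → Bool)) × (ℕ → Bool → (Fin (K-1) → Bool) → ℝ) :=
    fun g ω => ((fun t => (D1 g t ω, Dm1 g t ω)),
      (fun t d dm => po g t d dm ω)) with hV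
  have hVmeas : ∀ g : Fin G, Measurable (V g) := by
    intro g
    refine Measurable.prodMk ?_ ?_
    · exact measurable_pi_lambda _ fun t => (hD1meas g t).prodMk (hDm1meas g t)
    · exact measurable_pi_lambda _ fun t => measurable_pi_lambda _ fun d =>
        measurable_pi_lambda _ fun dm => hpomeas g t d dm
  have hsplitBg : ∀ g : Fin G,
      B q = A q g ∩ ⋂ i : ↥(({g}ᶜ : Finset (Fin G))), A q (i : Fin G) := by
    intro g
    ext ω
    simp only [hB, Set.mem_iInter, Set.mem_inter_iff]
    constructor
    · intro h; exact ⟨h g, fun i => h i⟩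
    · rintro ⟨h1, h2⟩ g'
      by_cases hg : g' = g
      · subst hg; exact h1
      · exact h2 ⟨g', by simp [hg]⟩
  have hCmeas : ∀ g : Fin G,
      MeasurableSet (⋂ i : ↥(({g}ᶜ : Finset (Fin G))), A q (i : Fin G)) :=
    fun g => MeasurableSet.iInter fun i => hAmeas q i
  have hIA : ∀ (g : Fin G)
      (F : (ℕ → Bool × (Fin (K-1) → Bool)) × (ℕ → Bool → (Fin (K-1) → Bool) → ℝ) → ℝ),
      Measurable F → Integrable (fun ω => F (V g ω)) μ →
      ∫ ω in B q, F (V g ω) ∂μ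
        = (μ (⋂ i : ↥(({g}ᶜ : Finset (Fin G))), A q (i : Fin G))).toReal
          * ∫ ω in A q g, F (V g ω) ∂μ := by
    intro g F hF hFint
    set C : Set Ω := ⋂ i : ↥(({g}ᶜ : Finset (Fin G))), A q (i : Fin G) with hC
    set Sg : Set ((ℕ → Bool × (Fin (K-1) → Bool)) × (ℕ → Bool → (Fin (K-1) → Bool) → ℝ)) :=
      {p | ∀ t : Fin (T+1), p.1 (t:ℕ) = q g t} with hSgdef
    have hSg : MeasurableSet Sg := by
      have e : Sg = ⋂ t : Fin (T+1),
          (fun p : (ℕ → Bool × (Fin (K-1) → Bool)) × (ℕ → Bool → (Fin (K-1) → Bool) → ℝ)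
            => p.1 (t:ℕ)) ⁻¹' {q g t} := by
        ext p; simp [hSgdef, Set.mem_iInter]
      rw [e]
      exact MeasurableSet.iInter fun t =>
        ((measurable_pi_apply _).comp measurable_fst) (measurableSet_singleton _)
    have hAg_pre : ∀ a : Ω, a ∈ A q g ↔ V g a ∈ Sg := fun a => Iff.rfl
    set SL : Set (↥(({g}ᶜ : Finset (Fin G))) →
        (ℕ → Bool × (Fin (K-1) → Bool)) × (ℕ → Bool → (Fin (K-1) → Bool) → ℝ)) :=
      {v | ∀ i, ∀ t : Fin (T+1), (v i).1 (t:ℕ) = q (i : Fin G) t} with hSLdef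
    have hSL : MeasurableSet SL := by
      have e : SL = ⋂ i, ⋂ t : Fin (T+1),
          (fun v : ↥(({g}ᶜ : Finset (Fin G))) →
            (ℕ → Bool × (Fin (K-1) → Bool)) × (ℕ → Bool → (Fin (K-1) → Bool) → ℝ)
            => (v i).1 (t:ℕ)) ⁻¹' {q (i : Fin G) t} := by
        ext v; simp [hSLdef, Set.mem_iInter]
      rw [e]
      exact MeasurableSet.iInter fun i => MeasurableSet.iInter fun t =>
        ((measurable_pi_apply _).comp (measurable_fst.comp (measurable_pi_apply i)))
          (measurableSet_singleton _)
    have hC_pre : ∀ a : Ω, a ∈ C ↔ (fun i : ↥(({g}ᶜ : Finset (Fin G))) => V (i : Fin G) a) ∈ SL := by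
      intro a
      simp only [hC, Set.mem_iInter, hSLdef, Set.mem_setOf_eq]
      exact ⟨fun h i t => h i t, fun h i t => h i t⟩
    have hIF := hindep.indepFun_finset ({g}ᶜ) {g} disjoint_compl_left hVmeas
    have he : Measurable (fun v : ↥(({g} : Finset (Fin G))) →
        (ℕ → Bool × (Fin (K-1) → Bool)) × (ℕ → Bool → (Fin (K-1) → Bool) → ℝ) =>
        v ⟨g, Finset.mem_singleton_self g⟩) := measurable_pi_apply _
    have hψmeas : Measurable (fun v : ↥(({g} : Finset (Fin G))) →
        (ℕ → Bool × (Fin (K-1) → Bool)) × (ℕ → Bool → (Fin (K-1) → Bool) → ℝ) =>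
        Sg.indicator (fun _ => (1:ℝ)) (v ⟨g, Finset.mem_singleton_self g⟩)
          * F (v ⟨g, Finset.mem_singleton_self g⟩)) :=
      ((measurable_const.indicator hSg).comp he).mul (hF.comp he)
    have hcomp := hIF.comp (_mγ := Real.measurableSpace) (_mγ' := Real.measurableSpace)
      (φ := SL.indicator fun _ => (1:ℝ))
      (ψ := fun v => Sg.indicator (fun _ => (1:ℝ)) (v ⟨g, Finset.mem_singleton_self g⟩)
        * F (v ⟨g, Finset.mem_singleton_self g⟩))
      (measurable_const.indicator hSL) hψmeas
    have hXeq : ((SL.indicator fun _ => (1:ℝ)) ∘ (fun a (i : ↥(({g}ᶜ : Finset (Fin G)))) =>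
        V (i : Fin G) a)) = C.indicator fun _ => (1:ℝ) := by
      funext a
      by_cases ha : a ∈ C
      · rw [Function.comp_apply, Set.indicator_of_mem ((hC_pre a).mp ha),
          Set.indicator_of_mem ha]
      · rw [Function.comp_apply, Set.indicator_of_notMem (fun h => ha ((hC_pre a).mpr h)),
          Set.indicator_of_notMem ha]
    have hYeq : ((fun v => Sg.indicator (fun _ => (1:ℝ)) (v ⟨g, Finset.mem_singleton_self g⟩)
        * F (v ⟨g, Finset.mem_singleton_self g⟩)) ∘
          (fun a (i : ↥(({g} : Finset (Fin G)))) => V (i : Fin G) a))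
        = (A q g).indicator (fun ω => F (V g ω)) := by
      funext a
      by_cases ha : a ∈ A q g
      · rw [Function.comp_apply, Set.indicator_of_mem ha]
        simp only [Set.indicator_of_mem ((hAg_pre a).mp ha), one_mul]
      · rw [Function.comp_apply, Set.indicator_of_notMem ha]
        simp only [Set.indicator_of_notMem (fun h => ha ((hAg_pre a).mpr h)), zero_mul]
    rw [hXeq, hYeq] at hcomp
    have hXint : Integrable (C.indicator fun _ => (1:ℝ)) μ :=
      (integrable_const 1).indicator (hCmeas g)
    have hYint : Integrable ((A q g).indicator fun ω => F (V g ω)) μ :=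
      hFint.indicator (hAmeas q g)
    have hprod := hcomp.integral_mul_eq_mul_integral hXint.aestronglyMeasurable hYint.aestronglyMeasurable
    have hLHS : (C.indicator fun _ => (1:ℝ)) * (A q g).indicator (fun ω => F (V g ω))
        = (B q).indicator fun ω => F (V g ω) := by
      funext a
      by_cases haA : a ∈ A q g <;> by_cases haC : a ∈ C
      · have haB : a ∈ B q := by rw [hsplitBg g]; exact ⟨haA, haC⟩
        simp [Set.indicator_of_mem haA, Set.indicator_of_mem haC, Set.indicator_of_mem haB]
      · have haB : a ∉ B q := by rw [hsplitBg g]; exact fun h => haC h.2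
        simp [Set.indicator_of_mem haA, Set.indicator_of_notMem haC,
          Set.indicator_of_notMem haB]
      · have haB : a ∉ B q := by rw [hsplitBg g]; exact fun h => haA h.1
        simp [Set.indicator_of_notMem haA, Set.indicator_of_mem haC,
          Set.indicator_of_notMem haB]
      · have haB : a ∉ B q := by rw [hsplitBg g]; exact fun h => haA h.1
        simp [Set.indicator_of_notMem haA, Set.indicator_of_notMem haC,
          Set.indicator_of_notMem haB]
    rw [hLHS] at hprod
    rw [← integral_indicator (hBmeas q), hprod, ← integral_indicator (hAmeas q g)]
    congr 1
    rw [integral_indicator_const (1:ℝ) (hCmeas g), smul_eq_mul, mul_one, measureReal_def]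
  have hGne : Nonempty (Fin G) := by
    by_contra h
    rw [not_nonempty_iff] at h
    have hpos := hN1pos ω₀
    rw [hN1, Finset.univ_eq_empty, Finset.sum_empty] at hpos
    exact lt_irrefl _ hpos
  obtain ⟨gref⟩ := hGne
  set lam : ℕ → ℝ := fun t => ∫ ω, (po gref t false (fun _ => false) ω
    - po gref (t-1) false (fun _ => false) ω) ∂μ with hlam
  have hevm : ∀ (t : ℕ), Measurable (fun p : (ℕ → Bool × (Fin (K-1) → Bool))
      × (ℕ → Bool → (Fin (K-1) → Bool) → ℝ) => p.2 t false (fun _ => false)) :=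
    fun t => (measurable_pi_apply _).comp ((measurable_pi_apply false).comp
      ((measurable_pi_apply t).comp measurable_snd))
  have hκeq : ∀ g : Fin G, (μ (B q)).toReal
      = (μ (⋂ i : ↥(({g}ᶜ : Finset (Fin G))), A q (i : Fin G))).toReal * (μ (A q g)).toReal := by
    intro g
    have h := hIA g (fun _ => (1:ℝ)) measurable_const (integrable_const 1)
    rw [setIntegral_const, setIntegral_const, smul_eq_mul, smul_eq_mul, mul_one, mul_one] at h
    exact h
  have hC1 : ∀ g : Fin G, ∀ t, 2 ≤ t → t ≤ T →
      (∫ ω in B q, po g t false (fun _ => false) ω ∂μ)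
        = (∫ ω in B q, po g (t-1) false (fun _ => false) ω ∂μ)
          + (μ (B q)).toReal * lam t := by
    intro g t h2 hle
    have hFmeas : Measurable (fun p : (ℕ → Bool × (Fin (K-1) → Bool))
        × (ℕ → Bool → (Fin (K-1) → Bool) → ℝ) =>
        p.2 t false (fun _ => false) - p.2 (t-1) false (fun _ => false)) :=
      (hevm t).sub (hevm (t-1))
    have hFint : Integrable (fun ω => po g t false (fun _ => false) ω
        - po g (t-1) false (fun _ => false) ω) μ :=
      (hpoint g t false _).sub (hpoint g (t-1) false _)
    have hdiff := hIA g (fun p => p.2 t false (fun _ => false)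
      - p.2 (t-1) false (fun _ => false)) hFmeas hFint
    have h1 : (∫ ω in A q g, (po g t false (fun _ => false) ω
        - po g (t-1) false (fun _ => false) ω) ∂μ) = lam t * (μ (A q g)).toReal := by
      rw [← setIntegral_condExp (hmDgle g) hFint (hAmDg q g),
        setIntegral_congr_ae ((hmDgle g) _ (hAmDg q g))
          ((hexo g t h2 hle).mono fun ω hb _ => hb),
        setIntegral_const, smul_eq_mul, hct g gref t h2 hle, mul_comm, measureReal_def]
    have h2' : (∫ ω in B q, (po g t false (fun _ => false) ω
        - po g (t-1) false (fun _ => false) ω) ∂μ)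
        = (∫ ω in B q, po g t false (fun _ => false) ω ∂μ)
          - (∫ ω in B q, po g (t-1) false (fun _ => false) ω ∂μ) :=
      integral_sub (hpoint g t false _).integrableOn (hpoint g (t-1) false _).integrableOn
    rw [h2'] at hdiff
    rw [h1] at hdiff
    rw [hκeq g]
    linarith [hdiff]
  have hC2 : ∀ g : Fin G, ∀ t, 1 ≤ t → t ≤ T →
      ∫ ω in B q, po g t false (fun _ => false) ω ∂μ
        = (∫ ω in B q, po g 1 false (fun _ => false) ω ∂μ)
          + (μ (B q)).toReal * ∑ s ∈ Finset.Icc 2 t, lam s := by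
    intro g t ht1 htT
    induction t, ht1 using Nat.le_induction with
    | base =>
      rw [Finset.Icc_eq_empty (by omega), Finset.sum_empty, mul_zero, add_zero]
    | succ n hn ih =>
      have hC1' := hC1 g (n+1) (by omega) htT
      rw [Nat.add_sub_cancel] at hC1'
      rw [hC1', ih (by omega), Finset.sum_Icc_succ_top (by omega : 2 ≤ n+1)]
      ring
  have hI00 : ∑ g, ∑ t ∈ Finset.Icc 1 T, (N g t / N1 ω₀ * w ω₀ g t)
      * (∫ ω in B q, po g t false (fun _ => false) ω ∂μ) = 0 := by
    have estep : ∀ g, ∀ t ∈ Finset.Icc 1 T,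
        (N g t / N1 ω₀ * w ω₀ g t) * (∫ ω in B q, po g t false (fun _ => false) ω ∂μ)
        = (N g t / N1 ω₀ * w ω₀ g t) * (∫ ω in B q, po g 1 false (fun _ => false) ω ∂μ)
          + (N g t / N1 ω₀ * w ω₀ g t)
            * ((μ (B q)).toReal * ∑ s ∈ Finset.Icc 2 t, lam s) := by
      intro g t ht
      rw [hC2 g t (Finset.mem_Icc.mp ht).1 (Finset.mem_Icc.mp ht).2]
      ring
    rw [Finset.sum_congr rfl (fun g _ => Finset.sum_congr rfl (estep g)),
      Finset.sum_congr rfl (fun g (_ : g ∈ Finset.univ) =>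
        Finset.sum_add_distrib (s := Finset.Icc 1 T)), Finset.sum_add_distrib]
    have p1 : ∑ g, ∑ t ∈ Finset.Icc 1 T, (N g t / N1 ω₀ * w ω₀ g t)
        * (∫ ω in B q, po g 1 false (fun _ => false) ω ∂μ) = 0 := by
      refine Finset.sum_eq_zero fun g _ => ?_
      rw [← Finset.sum_mul, hwsum1 ω₀ g, zero_mul]
    have p2 : ∑ g, ∑ t ∈ Finset.Icc 1 T, (N g t / N1 ω₀ * w ω₀ g t)
        * ((μ (B q)).toReal * ∑ s ∈ Finset.Icc 2 t, lam s) = 0 := by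
      rw [Finset.sum_comm]
      refine Finset.sum_eq_zero fun t ht => ?_
      rw [← Finset.sum_mul, hwsum2 ω₀ t ht, zero_mul]
    rw [p1, p2, add_zero]
  have hD1cc : ∀ g, ∀ t ∈ Finset.Icc 1 T, ∀ ω ∈ B q, D1 g t ω = D1 g t ω₀ := by
    intro g t ht ω hω
    rw [hD1c q g t (hTlt t ht) ω hω, hD1c q g t (hTlt t ht) ω₀ hω₀]
  have hΔmint : ∀ g t, Integrable (Δm g t) μ := by
    intro g t
    have e : Δm g t = fun ω => (∑ dm : Fin (K-1) → Bool,
        Set.indicator ((Dm1 g t) ⁻¹' {dm}) (po g t false dm) ω)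
        - po g t false (fun _ => false) ω := by
      funext ω
      rw [hΔm]
      congr 1
      symm
      refine (Finset.sum_eq_single_of_mem (Dm1 g t ω) (Finset.mem_univ _) ?_).trans ?_
      · intro dm _ hne
        apply Set.indicator_of_notMem
        intro h
        exact hne (Set.mem_singleton_iff.mp h).symm
      · apply Set.indicator_of_mem
        exact Set.mem_singleton _
    rw [e]
    exact (integrable_finset_sum _ fun dm _ =>
      (hpoint g t false dm).indicator ((hDm1meas g t) (measurableSet_singleton _))).sub
      (hpoint g t false _)
  have hJm : ∀ g, ∀ t ∈ Finset.Icc 1 T,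
      (∫ ω in B q, po g t false (Dm1 g t ω₀) ω ∂μ)
        - (∫ ω in B q, po g t false (fun _ => false) ω ∂μ)
        = (μ (B q)).toReal * ∑ k, dmR k g t ω₀ * δk k g t := by
    intro g t ht
    have e1 : (∫ ω in B q, po g t false (Dm1 g t ω₀) ω ∂μ)
        - (∫ ω in B q, po g t false (fun _ => false) ω ∂μ)
        = ∫ ω in B q, Δm g t ω ∂μ := by
      rw [← integral_sub (hpoint g t false _).integrableOn (hpoint g t false _).integrableOn]
      refine setIntegral_congr_fun (hBmeas q) fun ω hω => ?_
      rw [hΔm, hDm1cc g t ht ω hω]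
    rw [e1, ← setIntegral_condExp hmDle (hΔmint g t) (hBmD q),
      setIntegral_congr_ae (hmDle _ (hBmD q))
        ((hadd g t (Finset.mem_Icc.mp ht).1 (Finset.mem_Icc.mp ht).2).mono fun ω hb _ => hb)]
    have e2 : ∀ ω ∈ B q, ∑ k, dmR k g t ω * δk k g t = ∑ k, dmR k g t ω₀ * δk k g t :=
      fun ω hω => Finset.sum_congr rfl fun k _ => by rw [hdmc k g t ht ω hω]
    rw [setIntegral_congr_fun (hBmeas q) (fun ω hω => e2 ω hω), setIntegral_const, smul_eq_mul, measureReal_def]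
  -- the integral of βhat over the atom
  have hbig_beta : ∫ ω in B q, βhat ω ∂μ
      = ∑ g, ∑ t ∈ Finset.Icc 1 T, (N g t / N1 ω₀ * w ω₀ g t)
        * ((1 - d1R g t ω₀) * (∫ ω in B q, po g t false (Dm1 g t ω₀) ω ∂μ)
          + d1R g t ω₀ * (∫ ω in B q, po g t true (Dm1 g t ω₀) ω ∂μ)) := by
    have heq : Set.EqOn βhat (fun ω => ∑ g, ∑ t ∈ Finset.Icc 1 T,
        (N g t / N1 ω₀ * w ω₀ g t)
        * ((1 - d1R g t ω₀) * po g t false (Dm1 g t ω₀) ω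
          + d1R g t ω₀ * po g t true (Dm1 g t ω₀) ω)) (B q) := by
      intro ω hω
      rw [hβw ω]
      refine Finset.sum_congr rfl fun g _ => Finset.sum_congr rfl fun t ht => ?_
      rw [hY, hN1c ω hω, hwc ω hω g t ht, hD1cc g t ht ω hω, hDm1cc g t ht ω hω]
      rcases hb : D1 g t ω₀ with _ | _
      · rw [hd1R g t ω₀, hb]; norm_num
      · rw [hd1R g t ω₀, hb]; norm_num
    rw [setIntegral_congr_fun (hBmeas q) heq,
      integral_finset_sum (μ := μ.restrict (B q)) Finset.univ
        (f := fun g ω => ∑ t ∈ Finset.Icc 1 T, (N g t / N1 ω₀ * w ω₀ g t)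
          * ((1 - d1R g t ω₀) * po g t false (Dm1 g t ω₀) ω
            + d1R g t ω₀ * po g t true (Dm1 g t ω₀) ω))
        (fun g _ => integrable_finset_sum _ fun t _ => by
          exact ((((hpoint g t false _).const_mul _).add
            ((hpoint g t true _).const_mul _)).const_mul _).integrableOn)]
    refine Finset.sum_congr rfl fun g _ => ?_
    rw [integral_finset_sum (μ := μ.restrict (B q)) (Finset.Icc 1 T)
        (f := fun t ω => (N g t / N1 ω₀ * w ω₀ g t)
          * ((1 - d1R g t ω₀) * po g t false (Dm1 g t ω₀) ω
            + d1R g t ω₀ * po g t true (Dm1 g t ω₀) ω))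
        (fun t _ => by
          exact ((((hpoint g t false _).const_mul _).add
            ((hpoint g t true _).const_mul _)).const_mul _).integrableOn)]
    refine Finset.sum_congr rfl fun t ht => ?_
    rw [integral_const_mul _ _]
    congr 1
    rw [integral_add (f := fun ω => (1 - d1R g t ω₀) * po g t false (Dm1 g t ω₀) ω)
        (g := fun ω => d1R g t ω₀ * po g t true (Dm1 g t ω₀) ω)
        (by exact ((hpoint g t false _).const_mul _).integrableOn)
        (by exact ((hpoint g t true _).const_mul _).integrableOn),
      integral_const_mul _ _, integral_const_mul _ _]
  -- the integral of RHS over the atom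
  have hbig_rhs : ∫ ω in B q, RHS ω ∂μ
      = (∑ g, ∑ t ∈ Finset.Icc 1 T, d1R g t ω₀ * (N g t / N1 ω₀ * w ω₀ g t)
          * ((∫ ω in B q, po g t true (Dm1 g t ω₀) ω ∂μ)
            - (∫ ω in B q, po g t false (Dm1 g t ω₀) ω ∂μ)))
        + (μ (B q)).toReal * (∑ k, ∑ g, ∑ t ∈ Finset.Icc 1 T,
            dmR k g t ω₀ * (N g t / N1 ω₀ * w ω₀ g t) * δk k g t) := by
    have heq : Set.EqOn RHS (fun ω => (∑ g, ∑ t ∈ Finset.Icc 1 T,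
        d1R g t ω₀ * (N g t / N1 ω₀ * w ω₀ g t)
        * (po g t true (Dm1 g t ω₀) ω - po g t false (Dm1 g t ω₀) ω))
        + ∑ k, ∑ g, ∑ t ∈ Finset.Icc 1 T,
            dmR k g t ω₀ * (N g t / N1 ω₀ * w ω₀ g t) * δk k g t) (B q) := by
      intro ω hω
      rw [hRHS]
      congr 1
      · refine Finset.sum_congr rfl fun g _ => Finset.sum_congr rfl fun t ht => ?_
        rw [hΔ1, hN1c ω hω, hwc ω hω g t ht, hd1c g t ht ω hω, hDm1cc g t ht ω hω]
        ring
      · refine Finset.sum_congr rfl fun k _ => Finset.sum_congr rfl fun g _ =>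
          Finset.sum_congr rfl fun t ht => ?_
        rw [hN1c ω hω, hwc ω hω g t ht, hdmc k g t ht ω hω]
        ring
    rw [setIntegral_congr_fun (hBmeas q) heq,
      integral_add (f := fun ω => ∑ g, ∑ t ∈ Finset.Icc 1 T,
          d1R g t ω₀ * (N g t / N1 ω₀ * w ω₀ g t)
          * (po g t true (Dm1 g t ω₀) ω - po g t false (Dm1 g t ω₀) ω))
        (g := fun _ => ∑ k, ∑ g, ∑ t ∈ Finset.Icc 1 T,
            dmR k g t ω₀ * (N g t / N1 ω₀ * w ω₀ g t) * δk k g t)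
        (integrable_finset_sum _ fun g _ => integrable_finset_sum _ fun t _ => by
          exact (((hpoint g t true _).sub (hpoint g t false _)).const_mul _).integrableOn)
        (integrable_const _)]
    congr 1
    · rw [integral_finset_sum (μ := μ.restrict (B q)) Finset.univ
        (f := fun g ω => ∑ t ∈ Finset.Icc 1 T, d1R g t ω₀ * (N g t / N1 ω₀ * w ω₀ g t)
          * (po g t true (Dm1 g t ω₀) ω - po g t false (Dm1 g t ω₀) ω))
        (fun g _ => integrable_finset_sum _ fun t _ => by
          exact (((hpoint g t true _).sub (hpoint g t false _)).const_mul _).integrableOn)]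
      refine Finset.sum_congr rfl fun g _ => ?_
      rw [integral_finset_sum (μ := μ.restrict (B q)) (Finset.Icc 1 T)
        (f := fun t ω => d1R g t ω₀ * (N g t / N1 ω₀ * w ω₀ g t)
          * (po g t true (Dm1 g t ω₀) ω - po g t false (Dm1 g t ω₀) ω))
        (fun t _ => by
          exact (((hpoint g t true _).sub (hpoint g t false _)).const_mul _).integrableOn)]
      refine Finset.sum_congr rfl fun t ht => ?_
      rw [integral_const_mul _ _,
        integral_sub (by exact (hpoint g t true _).integrableOn)
          (by exact (hpoint g t false _).integrableOn)]
    · rw [setIntegral_const, smul_eq_mul, measureReal_def]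
  -- final assembly
  rw [hbig_beta, hbig_rhs]
  have hPf : ∀ g, ∀ t ∈ Finset.Icc 1 T,
      (N g t / N1 ω₀ * w ω₀ g t) * (∫ ω in B q, po g t false (Dm1 g t ω₀) ω ∂μ)
      = (N g t / N1 ω₀ * w ω₀ g t) * (∫ ω in B q, po g t false (fun _ => false) ω ∂μ)
        + (μ (B q)).toReal * ∑ k, dmR k g t ω₀ * (N g t / N1 ω₀ * w ω₀ g t) * δk k g t := by
    intro g t ht
    have h := hJm g t ht
    have e : ∑ k, dmR k g t ω₀ * (N g t / N1 ω₀ * w ω₀ g t) * δk k g t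
        = (N g t / N1 ω₀ * w ω₀ g t) * ∑ k, dmR k g t ω₀ * δk k g t := by
      rw [Finset.mul_sum]
      exact Finset.sum_congr rfl fun k _ => by ring
    rw [e]
    linear_combination (N g t / N1 ω₀ * w ω₀ g t) * h
  have hsplitterm : ∀ g, ∀ t ∈ Finset.Icc 1 T,
      (N g t / N1 ω₀ * w ω₀ g t)
        * ((1 - d1R g t ω₀) * (∫ ω in B q, po g t false (Dm1 g t ω₀) ω ∂μ)
          + d1R g t ω₀ * (∫ ω in B q, po g t true (Dm1 g t ω₀) ω ∂μ))
      = d1R g t ω₀ * (N g t / N1 ω₀ * w ω₀ g t)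
          * ((∫ ω in B q, po g t true (Dm1 g t ω₀) ω ∂μ)
            - (∫ ω in B q, po g t false (Dm1 g t ω₀) ω ∂μ))
        + (N g t / N1 ω₀ * w ω₀ g t) * (∫ ω in B q, po g t false (Dm1 g t ω₀) ω ∂μ) := by
    intro g t ht
    ring
  rw [Finset.sum_congr rfl (fun g _ => Finset.sum_congr rfl (hsplitterm g)),
    Finset.sum_congr rfl (fun g (_ : g ∈ Finset.univ) =>
      Finset.sum_add_distrib (s := Finset.Icc 1 T)), Finset.sum_add_distrib]
  congr 1
  rw [Finset.sum_congr rfl (fun g _ => Finset.sum_congr rfl (hPf g)),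
    Finset.sum_congr rfl (fun g (_ : g ∈ Finset.univ) =>
      Finset.sum_add_distrib (s := Finset.Icc 1 T)), Finset.sum_add_distrib, hI00, zero_add]
  calc ∑ g, ∑ t ∈ Finset.Icc 1 T, (μ (B q)).toReal
        * ∑ k, dmR k g t ω₀ * (N g t / N1 ω₀ * w ω₀ g t) * δk k g t
      = ∑ g, ∑ k, ∑ t ∈ Finset.Icc 1 T, (μ (B q)).toReal
        * (dmR k g t ω₀ * (N g t / N1 ω₀ * w ω₀ g t) * δk k g t) := by
        refine Finset.sum_congr rfl fun g _ => ?_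
        rw [← Finset.sum_comm]
        exact Finset.sum_congr rfl fun t _ => Finset.mul_sum _ _ _
    _ = ∑ k, ∑ g, ∑ t ∈ Finset.Icc 1 T, (μ (B q)).toReal
        * (dmR k g t ω₀ * (N g t / N1 ω₀ * w ω₀ g t) * δk k g t) := Finset.sum_comm
    _ = (μ (B q)).toReal * ∑ k, ∑ g, ∑ t ∈ Finset.Icc 1 T,
        dmR k g t ω₀ * (N g t / N1 ω₀ * w ω₀ g t) * δk k g t := by
        rw [Finset.mul_sum]
        refine Finset.sum_congr rfl fun k _ => ?_
        rw [Finset.mul_sum]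
        refine Finset.sum_congr rfl fun g _ => ?_
        rw [Finset.mul_sum]
end

section
/- Under the setting of the two-treatment decomposition theorem (K=2), if treatment effects are constant — Δ^1_{g,t}(D^2_{g,t}) = δ^1 and Δ^{0,1}_{g,t} = δ^2 almost surely for real numbers δ^1, δ^2 — then β_fe = δ^1, i.e., the TWFE estimator β̂_fe is unbiased for the effect of the first treatment. -/
open Finset MeasureTheory ProbabilityTheory

lemma foc_aux {ι : Type*} (I : Finset ι) (n r x : ι → ℝ)
    (h : ∀ s : ℝ, ∑ i ∈ I, n i * (r i) ^ 2 ≤ ∑ i ∈ I, n i * (r i - s * x i) ^ 2) :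
    ∑ i ∈ I, n i * (r i * x i) = 0 := by
  set B := ∑ i ∈ I, n i * (r i * x i) with hB
  set A := ∑ i ∈ I, n i * (x i) ^ 2 with hA
  have key : ∀ s : ℝ, 0 ≤ A * s ^ 2 - 2 * B * s := by
    intro s
    have h1 := h s
    have h2 : ∑ i ∈ I, n i * (r i - s * x i) ^ 2
        = ∑ i ∈ I, n i * (r i) ^ 2 + (A * s ^ 2 - 2 * B * s) := by
      rw [hA, hB, Finset.sum_mul, Finset.mul_sum, Finset.sum_mul, ← Finset.sum_sub_distrib,
        ← Finset.sum_add_distrib]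
      exact Finset.sum_congr rfl fun i _ => by ring
    rw [h2] at h1; linarith
  by_contra hBne
  rcases le_or_gt A 0 with hA0 | hA0
  · have h6 := key B
    have h7 : 0 ≤ (-A) * B ^ 2 := mul_nonneg (neg_nonneg.mpr hA0) (sq_nonneg B)
    have h8 : 0 < B ^ 2 := by positivity
    nlinarith
  · have h5 := key (B / A)
    have hAne : A ≠ 0 := ne_of_gt hA0
    have e1 : A * (B / A) ^ 2 - 2 * B * (B / A) = -(B ^ 2 / A) := by
      field_simp; ring
    rw [e1] at h5
    have : 0 < B ^ 2 / A := div_pos (by positivity) hA0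
    linarith

lemma telescope_Icc (f : ℕ → ℝ) : ∀ t : ℕ, 1 ≤ t →
    ∑ k ∈ Finset.Icc 2 t, (f k - f (k - 1)) = f t - f 1 := by
  intro t ht
  induction t with
  | zero => omega
  | succ n ih =>
    rcases Nat.lt_or_ge n 1 with hn | hn
    · have hn0 : n = 0 := by omega
      subst hn0
      simp
    · rw [Finset.sum_Icc_succ_top (by omega : 2 ≤ n + 1), ih hn]
      simp


/-- With `K = 2` treatments, under the assumptions of the
two-treatment decomposition theorem, if treatment effects are constant —
`Δ¹_{g,t}(D²_{g,t}) = δ¹` and `Δ^{0,1}_{g,t} = δ²` almost surely — then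
`β_fe = E[β̂_fe] = δ¹`: the TWFE estimator is unbiased for the effect of the
first treatment. -/
theorem twfe_unbiased_constant_effects_K2
    (G T : ℕ) (hT : 1 ≤ T)
    {Ω : Type} [inst : MeasurableSpace Ω]
    (μ : Measure Ω) [IsProbabilityMeasure μ]
    (po : Fin G → ℕ → Bool → Bool → Ω → ℝ)
    (hpomeas : ∀ g t d dm, Measurable (po g t d dm))
    (hpoint : ∀ g t d dm, Integrable (po g t d dm) μ)
    (D1 : Fin G → ℕ → Ω → Bool)
    (D2 : Fin G → ℕ → Ω → Bool)
    (hD1meas : ∀ g t, Measurable (D1 g t))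
    (hD2meas : ∀ g t, Measurable (D2 g t))
    (Y : Fin G → ℕ → Ω → ℝ)
    (hY : ∀ g t ω, Y g t ω = po g t (D1 g t ω) (D2 g t ω) ω)
    (mDg : Fin G → MeasurableSpace Ω)
    (hmDg : ∀ g, mDg g = MeasurableSpace.comap
      (fun ω => fun (t : ℕ) => (D1 g t ω, D2 g t ω)) inferInstance)
    -- independent groups
    (hindep : iIndepFun
      (fun (g : Fin G) (ω : Ω) =>
        ((fun (t : ℕ) => (D1 g t ω, D2 g t ω)),
         (fun (t : ℕ) (d d2 : Bool) => po g t d d2 ω))) μ)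
    -- strong exogeneity of the never-treated outcome
    (hexo : ∀ g t, 2 ≤ t → t ≤ T →
      μ[fun ω => po g t false false ω -
          po g (t - 1) false false ω | mDg g]
        =ᵐ[μ] fun _ => ∫ ω, (po g t false false ω -
          po g (t - 1) false false ω) ∂μ)
    -- common trends of the never-treated outcome
    (hct : ∀ g g' t, 2 ≤ t → t ≤ T →
      ∫ ω, (po g t false false ω -
        po g (t - 1) false false ω) ∂μ =
      ∫ ω, (po g' t false false ω -
        po g' (t - 1) false false ω) ∂μ)
    -- weights (number of observations per cell), balanced panel
    (N : Fin G → ℕ → ℝ) (hN : ∀ g t, 0 < N g t)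
    -- real-valued treatments
    (d1R d2R : Fin G → ℕ → Ω → ℝ)
    (hd1R : ∀ g t ω, d1R g t ω = if D1 g t ω then 1 else 0)
    (hd2R : ∀ g t ω, d2R g t ω = if D2 g t ω then 1 else 0)
    -- the TWFE regression: realization-by-realization weighted least squares
    (βhat αhat : Ω → ℝ) (γhat : Ω → Fin G → ℝ) (νhat : Ω → ℕ → ℝ)
    (ζhat : Ω → ℝ)
    (hreg : ∀ ω, ∀ (α' β' ζ' : ℝ) (γ' : Fin G → ℝ) (ν' : ℕ → ℝ),
      ∑ g, ∑ t ∈ Finset.Icc 1 T, N g t * (Y g t ω - αhat ω - γhat ω g - νhat ω t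
        - βhat ω * d1R g t ω - ζhat ω * d2R g t ω) ^ 2 ≤
      ∑ g, ∑ t ∈ Finset.Icc 1 T, N g t * (Y g t ω - α' - γ' g - ν' t
        - β' * d1R g t ω - ζ' * d2R g t ω) ^ 2)
    -- first-stage regression of D¹ on the other regressors, and its residual ε
    (a0 : Ω → ℝ) (c0 : Ω → Fin G → ℝ) (v0 : Ω → ℕ → ℝ) (z0 : Ω → ℝ)
    (hfs : ∀ ω, ∀ (a' z' : ℝ) (c' : Fin G → ℝ) (v' : ℕ → ℝ),
      ∑ g, ∑ t ∈ Finset.Icc 1 T, N g t * (d1R g t ω - a0 ω - c0 ω g - v0 ω t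
        - z0 ω * d2R g t ω) ^ 2 ≤
      ∑ g, ∑ t ∈ Finset.Icc 1 T, N g t * (d1R g t ω - a' - c' g - v' t
        - z' * d2R g t ω) ^ 2)
    (ε : Ω → Fin G → ℕ → ℝ)
    (hε : ∀ ω g t, ε ω g t = d1R g t ω - a0 ω - c0 ω g - v0 ω t
      - z0 ω * d2R g t ω)
    -- number of treated observations, and the normalization of the weights
    (N1 : Ω → ℝ) (hN1 : ∀ ω, N1 ω = ∑ g, ∑ t ∈ Finset.Icc 1 T, N g t * d1R g t ω)
    (hN1pos : ∀ ω, 0 < N1 ω)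
    (εbar : Ω → ℝ)
    (hεbar : ∀ ω, εbar ω =
      ∑ g, ∑ t ∈ Finset.Icc 1 T, N g t / N1 ω * d1R g t ω * ε ω g t)
    (hεbarne : ∀ ω, εbar ω ≠ 0)  -- no collinearity
    (w : Ω → Fin G → ℕ → ℝ) (hw : ∀ ω g t, w ω g t = ε ω g t / εbar ω)
    -- constant treatment effects
    (δ1 δ2 : ℝ)
    (hconst : ∀ᵐ ω ∂μ, ∀ g t, 1 ≤ t → t ≤ T →
      po g t true (D2 g t ω) ω - po g t false (D2 g t ω) ω = δ1 ∧
      po g t false true ω - po g t false false ω = δ2)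
    (hβint : Integrable βhat μ) :
    ∫ ω, βhat ω ∂μ = δ1 := by
  classical
  -- Ω is nonempty
  have hΩne : Nonempty Ω := by
    by_contra h
    rw [not_nonempty_iff] at h
    have h1 : (μ Set.univ) = 1 := measure_univ
    rw [Set.univ_eq_empty_iff.mpr h, measure_empty] at h1
    exact zero_ne_one h1
  obtain ⟨ω₀⟩ := hΩne
  -- G is positive
  have hG : 0 < G := by
    by_contra hg
    push_neg at hg
    have hG0 : G = 0 := by omega
    haveI hGE : IsEmpty (Fin G) := by subst hG0; exact Fin.isEmpty
    have h1 := hN1pos ω₀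
    rw [hN1 ω₀, Finset.univ_eq_empty, Finset.sum_empty] at h1
    exact lt_irrefl _ h1
  -- first-stage FOCs, all directions at once
  have fsFOC : ∀ ω (a' z' : ℝ) (c' : Fin G → ℝ) (v' : ℕ → ℝ),
      ∑ g, ∑ t ∈ Finset.Icc 1 T,
        N g t * (ε ω g t * (a' + c' g + v' t + z' * d2R g t ω)) = 0 := by
    intro ω a' z' c' v'
    have key : ∀ s : ℝ,
        ∑ p ∈ Finset.univ ×ˢ Finset.Icc 1 T, N p.1 p.2 * (ε ω p.1 p.2) ^ 2 ≤
        ∑ p ∈ Finset.univ ×ˢ Finset.Icc 1 T, N p.1 p.2 *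
          (ε ω p.1 p.2 - s * (a' + c' p.1 + v' p.2 + z' * d2R p.1 p.2 ω)) ^ 2 := by
      intro s
      rw [Finset.sum_product, Finset.sum_product]
      calc ∑ g, ∑ t ∈ Finset.Icc 1 T, N g t * (ε ω g t) ^ 2
          = ∑ g, ∑ t ∈ Finset.Icc 1 T, N g t * (d1R g t ω - a0 ω - c0 ω g - v0 ω t
              - z0 ω * d2R g t ω) ^ 2 :=
            Finset.sum_congr rfl fun g _ => Finset.sum_congr rfl fun t _ => by rw [hε]
        _ ≤ ∑ g, ∑ t ∈ Finset.Icc 1 T, N g t * (d1R g t ω - (a0 ω + s * a')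
              - ((fun g => c0 ω g + s * c' g) g) - ((fun t => v0 ω t + s * v' t) t)
              - (z0 ω + s * z') * d2R g t ω) ^ 2 :=
            hfs ω (a0 ω + s * a') (z0 ω + s * z') _ _
        _ = ∑ g, ∑ t ∈ Finset.Icc 1 T, N g t *
              (ε ω g t - s * (a' + c' g + v' t + z' * d2R g t ω)) ^ 2 :=
            Finset.sum_congr rfl fun g _ => Finset.sum_congr rfl fun t _ => by rw [hε]; ring
    have h := foc_aux (Finset.univ ×ˢ Finset.Icc 1 T) (fun p => N p.1 p.2)
      (fun p => ε ω p.1 p.2) (fun p => a' + c' p.1 + v' p.2 + z' * d2R p.1 p.2 ω) key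
    rwa [Finset.sum_product] at h
  -- the TWFE regression FOCs, all directions at once
  set u : Ω → Fin G → ℕ → ℝ := fun ω g t => Y g t ω - αhat ω - γhat ω g - νhat ω t
    - βhat ω * d1R g t ω - ζhat ω * d2R g t ω with hu
  have regFOC : ∀ ω (α' β' ζ' : ℝ) (γ' : Fin G → ℝ) (ν' : ℕ → ℝ),
      ∑ g, ∑ t ∈ Finset.Icc 1 T,
        N g t * (u ω g t * (α' + γ' g + ν' t + β' * d1R g t ω + ζ' * d2R g t ω)) = 0 := by
    intro ω α' β' ζ' γ' ν'
    have key : ∀ s : ℝ,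
        ∑ p ∈ Finset.univ ×ˢ Finset.Icc 1 T, N p.1 p.2 * (u ω p.1 p.2) ^ 2 ≤
        ∑ p ∈ Finset.univ ×ˢ Finset.Icc 1 T, N p.1 p.2 *
          (u ω p.1 p.2 - s * (α' + γ' p.1 + ν' p.2 + β' * d1R p.1 p.2 ω
            + ζ' * d2R p.1 p.2 ω)) ^ 2 := by
      intro s
      rw [Finset.sum_product, Finset.sum_product]
      calc ∑ g, ∑ t ∈ Finset.Icc 1 T, N g t * (u ω g t) ^ 2
          = ∑ g, ∑ t ∈ Finset.Icc 1 T, N g t * (Y g t ω - αhat ω - γhat ω g - νhat ω t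
              - βhat ω * d1R g t ω - ζhat ω * d2R g t ω) ^ 2 :=
            Finset.sum_congr rfl fun g _ => Finset.sum_congr rfl fun t _ => by rw [hu]
        _ ≤ ∑ g, ∑ t ∈ Finset.Icc 1 T, N g t * (Y g t ω - (αhat ω + s * α')
              - ((fun g => γhat ω g + s * γ' g) g) - ((fun t => νhat ω t + s * ν' t) t)
              - (βhat ω + s * β') * d1R g t ω - (ζhat ω + s * ζ') * d2R g t ω) ^ 2 :=
            hreg ω (αhat ω + s * α') (βhat ω + s * β') (ζhat ω + s * ζ') _ _
        _ = ∑ g, ∑ t ∈ Finset.Icc 1 T, N g t *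
              (u ω g t - s * (α' + γ' g + ν' t + β' * d1R g t ω + ζ' * d2R g t ω)) ^ 2 :=
            Finset.sum_congr rfl fun g _ => Finset.sum_congr rfl fun t _ => by rw [hu]; ring
    have h := foc_aux (Finset.univ ×ˢ Finset.Icc 1 T) (fun p => N p.1 p.2)
      (fun p => u ω p.1 p.2)
      (fun p => α' + γ' p.1 + ν' p.2 + β' * d1R p.1 p.2 ω + ζ' * d2R p.1 p.2 ω) key
    rwa [Finset.sum_product] at h
  -- derived first-stage FOCs
  have fsGroup : ∀ ω g, ∑ t ∈ Finset.Icc 1 T, N g t * ε ω g t = 0 := by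
    intro ω g
    have h := fsFOC ω 0 0 (fun g' => if g' = g then 1 else 0) (fun _ => 0)
    rw [Finset.sum_eq_single g] at h
    · rw [← h]
      exact Finset.sum_congr rfl fun t _ => by simp
    · intro g' _ hne
      exact Finset.sum_eq_zero fun t _ => by simp [hne]
    · intro hg'
      exact absurd (Finset.mem_univ g) hg'
  have fsTime : ∀ ω t, t ∈ Finset.Icc 1 T → ∑ g, N g t * ε ω g t = 0 := by
    intro ω t ht
    have h := fsFOC ω 0 0 (fun _ => 0) (fun t' => if t' = t then 1 else 0)
    rw [Finset.sum_comm] at h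
    rw [Finset.sum_eq_single_of_mem t ht] at h
    · rw [← h]
      exact Finset.sum_congr rfl fun g _ => by simp
    · intro t' _ hne
      exact Finset.sum_eq_zero fun g _ => by simp [hne]
  have fsD2 : ∀ ω, ∑ g, ∑ t ∈ Finset.Icc 1 T, N g t * (ε ω g t * d2R g t ω) = 0 := by
    intro ω
    have h := fsFOC ω 0 1 (fun _ => 0) (fun _ => 0)
    rw [← h]
    exact Finset.sum_congr rfl fun g _ => Finset.sum_congr rfl fun t _ => by norm_num
  have fsD1 : ∀ ω, ∑ g, ∑ t ∈ Finset.Icc 1 T, N g t * (ε ω g t * d1R g t ω)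
      = N1 ω * εbar ω := by
    intro ω
    have hne : N1 ω ≠ 0 := ne_of_gt (hN1pos ω)
    rw [hεbar ω, Finset.mul_sum]
    refine Finset.sum_congr rfl fun g _ => ?_
    rw [Finset.mul_sum]
    refine Finset.sum_congr rfl fun t _ => ?_
    field_simp
  -- orthogonality of the two residuals
  have orth : ∀ ω, ∑ g, ∑ t ∈ Finset.Icc 1 T, N g t * (u ω g t * ε ω g t) = 0 := by
    intro ω
    have h1 := regFOC ω 0 1 0 (fun _ => 0) (fun _ => 0)
    have h2 := regFOC ω (a0 ω) 0 (z0 ω) (c0 ω) (v0 ω)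
    have h3 : ∑ g, ∑ t ∈ Finset.Icc 1 T, N g t * (u ω g t * ε ω g t)
        = ∑ g, ∑ t ∈ Finset.Icc 1 T,
          (N g t * (u ω g t * (0 + (fun _ => (0:ℝ)) g + (fun _ => (0:ℝ)) t
              + 1 * d1R g t ω + 0 * d2R g t ω))
          - N g t * (u ω g t * (a0 ω + c0 ω g + v0 ω t
              + 0 * d1R g t ω + z0 ω * d2R g t ω))) :=
      Finset.sum_congr rfl fun g _ => Finset.sum_congr rfl fun t _ => by rw [hε]; ring
    rw [h3, Finset.sum_congr rfl fun g _ => Finset.sum_sub_distrib _ _,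
      Finset.sum_sub_distrib, h1, h2, sub_zero]
  -- the key regression identity
  have key1 : ∀ ω, ∑ g, ∑ t ∈ Finset.Icc 1 T, N g t * (ε ω g t * Y g t ω)
      = βhat ω * (N1 ω * εbar ω) := by
    intro ω
    have h5 := orth ω
    have h6 := fsFOC ω (αhat ω) (ζhat ω) (γhat ω) (νhat ω)
    have h3 : ∑ g, ∑ t ∈ Finset.Icc 1 T, N g t * (ε ω g t * Y g t ω)
        = ∑ g, ∑ t ∈ Finset.Icc 1 T,
          (N g t * (u ω g t * ε ω g t)
          + N g t * (ε ω g t * (αhat ω + γhat ω g + νhat ω t + ζhat ω * d2R g t ω))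
          + βhat ω * (N g t * (ε ω g t * d1R g t ω))) :=
      Finset.sum_congr rfl fun g _ => Finset.sum_congr rfl fun t _ => by rw [hu]; ring
    rw [h3]
    simp only [Finset.sum_add_distrib]
    simp only [← Finset.mul_sum]
    rw [h5, h6, fsD1 ω]
    ring
  -- Abel summation of the never-treated outcome against the residuals
  have abel : ∀ ω, ∑ g, ∑ t ∈ Finset.Icc 1 T, N g t * (ε ω g t * po g t false false ω)
      = ∑ k ∈ Finset.Icc 2 T, ∑ g,
          (po g k false false ω - po g (k - 1) false false ω)
          * (∑ t ∈ Finset.Icc k T, N g t * ε ω g t) := by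
    intro ω
    have habelg : ∀ g : Fin G,
        ∑ t ∈ Finset.Icc 1 T, N g t * (ε ω g t * po g t false false ω)
        = ∑ k ∈ Finset.Icc 2 T, (po g k false false ω - po g (k - 1) false false ω)
            * (∑ t ∈ Finset.Icc k T, N g t * ε ω g t) := by
      intro g
      calc ∑ t ∈ Finset.Icc 1 T, N g t * (ε ω g t * po g t false false ω)
          = ∑ t ∈ Finset.Icc 1 T, (N g t * ε ω g t * po g 1 false false ω
              + ∑ k ∈ Finset.Icc 2 T, ite (k ≤ t)
                  (N g t * ε ω g t * (po g k false false ω - po g (k - 1) false false ω)) 0)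
            := by
            refine Finset.sum_congr rfl fun t ht => ?_
            rw [Finset.mem_Icc] at ht
            have htel := telescope_Icc (fun k => po g k false false ω) t ht.1
            have hfil : Finset.Icc 2 t = (Finset.Icc 2 T).filter (fun k => k ≤ t) := by
              ext k
              simp only [Finset.mem_Icc, Finset.mem_filter]
              omega
            rw [hfil, Finset.sum_filter] at htel
            have h7 : ∑ k ∈ Finset.Icc 2 T, ite (k ≤ t)
                (N g t * ε ω g t * (po g k false false ω - po g (k - 1) false false ω)) 0
                = N g t * ε ω g t * (po g t false false ω - po g 1 false false ω) := by
              rw [← htel, Finset.mul_sum]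
              exact Finset.sum_congr rfl fun k _ => by rw [mul_ite, mul_zero]
            rw [h7]; ring
        _ = (∑ t ∈ Finset.Icc 1 T, N g t * ε ω g t * po g 1 false false ω)
            + ∑ t ∈ Finset.Icc 1 T, ∑ k ∈ Finset.Icc 2 T, ite (k ≤ t)
                (N g t * ε ω g t * (po g k false false ω - po g (k - 1) false false ω)) 0
            := Finset.sum_add_distrib
        _ = ∑ k ∈ Finset.Icc 2 T, (po g k false false ω - po g (k - 1) false false ω)
              * (∑ t ∈ Finset.Icc k T, N g t * ε ω g t) := by
            rw [← Finset.sum_mul, fsGroup ω g, zero_mul, zero_add, Finset.sum_comm]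
            refine Finset.sum_congr rfl fun k hk => ?_
            rw [Finset.mem_Icc] at hk
            have hfil2 : (Finset.Icc 1 T).filter (fun t => k ≤ t) = Finset.Icc k T := by
              ext t
              simp only [Finset.mem_Icc, Finset.mem_filter]
              omega
            rw [← Finset.sum_filter, hfil2, Finset.mul_sum]
            exact Finset.sum_congr rfl fun t _ => by ring
    rw [Finset.sum_congr rfl fun g _ => habelg g]
    exact Finset.sum_comm
  -- pointwise identity on the almost-sure event of constant treatment effects
  have hpt : ∀ᵐ ω ∂μ, βhat ω = δ1 + ∑ k ∈ Finset.Icc 2 T, ∑ g,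
      (po g k false false ω - po g (k - 1) false false ω)
      * ((∑ t ∈ Finset.Icc k T, N g t * ε ω g t) / (N1 ω * εbar ω)) := by
    filter_upwards [hconst] with ω hgood
    have hD : N1 ω * εbar ω ≠ 0 := mul_ne_zero (hN1pos ω).ne' (hεbarne ω)
    have hterm : ∀ g, ∀ t ∈ Finset.Icc 1 T, N g t * (ε ω g t * Y g t ω)
        = N g t * (ε ω g t * po g t false false ω)
        + δ1 * (N g t * (ε ω g t * d1R g t ω))
        + δ2 * (N g t * (ε ω g t * d2R g t ω)) := by
      intro g t ht
      rw [Finset.mem_Icc] at ht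
      obtain ⟨h1, h2⟩ := hgood g t ht.1 ht.2
      rw [hY g t ω, hd1R g t ω, hd2R g t ω]
      cases hb1 : D1 g t ω <;> cases hb2 : D2 g t ω <;> rw [hb2] at h1 <;>
        simp only [if_pos, if_neg Bool.false_ne_true, if_true]
      · ring
      · have h9 : po g t false true ω = po g t false false ω + δ2 := by linarith
        rw [h9]; ring
      · have h9 : po g t true false ω = po g t false false ω + δ1 := by linarith
        rw [h9]; ring
      · have h9 : po g t true true ω = po g t false false ω + δ1 + δ2 := by linarith
        rw [h9]; ring
    have e2 : ∑ g, ∑ t ∈ Finset.Icc 1 T, N g t * (ε ω g t * Y g t ω)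
        = (∑ g, ∑ t ∈ Finset.Icc 1 T, N g t * (ε ω g t * po g t false false ω))
          + δ1 * (N1 ω * εbar ω) := by
      calc ∑ g, ∑ t ∈ Finset.Icc 1 T, N g t * (ε ω g t * Y g t ω)
          = ∑ g, ∑ t ∈ Finset.Icc 1 T,
              (N g t * (ε ω g t * po g t false false ω)
              + δ1 * (N g t * (ε ω g t * d1R g t ω))
              + δ2 * (N g t * (ε ω g t * d2R g t ω))) :=
            Finset.sum_congr rfl fun g _ => Finset.sum_congr rfl (hterm g)
        _ = _ := by
            simp only [Finset.sum_add_distrib, ← Finset.mul_sum]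
            rw [fsD1 ω, fsD2 ω, mul_zero, add_zero]
    have key1' : βhat ω * (N1 ω * εbar ω)
        = (∑ k ∈ Finset.Icc 2 T, ∑ g,
            (po g k false false ω - po g (k - 1) false false ω)
            * (∑ t ∈ Finset.Icc k T, N g t * ε ω g t))
          + δ1 * (N1 ω * εbar ω) := by
      have := key1 ω
      have := e2
      have := abel ω
      linarith
    have hsum : ∑ k ∈ Finset.Icc 2 T, ∑ g,
        (po g k false false ω - po g (k - 1) false false ω)
        * ((∑ t ∈ Finset.Icc k T, N g t * ε ω g t) / (N1 ω * εbar ω))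
        = (∑ k ∈ Finset.Icc 2 T, ∑ g,
            (po g k false false ω - po g (k - 1) false false ω)
            * (∑ t ∈ Finset.Icc k T, N g t * ε ω g t)) / (N1 ω * εbar ω) := by
      rw [Finset.sum_div]
      refine Finset.sum_congr rfl fun k _ => ?_
      rw [Finset.sum_div]
      exact Finset.sum_congr rfl fun g _ => (mul_div_assoc _ _ _).symm
    rw [hsum]
    apply mul_right_cancel₀ hD
    rw [add_mul, div_mul_cancel₀ _ hD]
    linarith
  -- Part B: expectations.
  have hΔmeas : ∀ (g : Fin G) (k : ℕ),
      Measurable (fun ω => po g k false false ω - po g (k - 1) false false ω) :=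
    fun g k => (hpomeas g k false false).sub (hpomeas g (k - 1) false false)
  have hΔint : ∀ (g : Fin G) (k : ℕ),
      Integrable (fun ω => po g k false false ω - po g (k - 1) false false ω) μ :=
    fun g k => (hpoint g k false false).sub (hpoint g (k - 1) false false)
  set g₀ : Fin G := ⟨0, hG⟩ with hg₀
  set c : ℕ → ℝ := fun k => ∫ ω, (po g₀ k false false ω - po g₀ (k - 1) false false ω) ∂μ
    with hcdef
  have hceq : ∀ (g : Fin G) (k : ℕ), 2 ≤ k → k ≤ T →
      ∫ ω, (po g k false false ω - po g (k - 1) false false ω) ∂μ = c k :=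
    fun g k h2 hk => hct g g₀ k h2 hk
  set W : Fin G → ℕ → Ω → ℝ :=
    fun g k ω => (∑ t ∈ Finset.Icc k T, N g t * ε ω g t) / (N1 ω * εbar ω) with hWdef
  have hpt' : ∀ᵐ ω ∂μ, βhat ω = δ1 + ∑ k ∈ Finset.Icc 2 T, ∑ g,
      (po g k false false ω - po g (k - 1) false false ω) * W g k ω := hpt
  -- the configuration map
  set cfg : Ω → (Fin G → Fin (T + 1) → Bool × Bool) :=
    fun ω g i => (D1 g (i : ℕ) ω, D2 g (i : ℕ) ω) with hcfg
  have hdeq : ∀ ω ω', cfg ω = cfg ω' → ∀ (g : Fin G), ∀ t ∈ Finset.Icc 1 T,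
      d1R g t ω = d1R g t ω' ∧ d2R g t ω = d2R g t ω' := by
    intro ω ω' hconf g t ht
    rw [Finset.mem_Icc] at ht
    have hlt : t < T + 1 := by omega
    have h1 : cfg ω g ⟨t, hlt⟩ = cfg ω' g ⟨t, hlt⟩ := by rw [hconf]
    simp only [hcfg] at h1
    have hD1e : D1 g t ω = D1 g t ω' := congrArg Prod.fst h1
    have hD2e : D2 g t ω = D2 g t ω' := congrArg Prod.snd h1
    rw [hd1R, hd1R, hd2R, hd2R, hD1e, hD2e]
    exact ⟨rfl, rfl⟩
  have hεeq : ∀ ω ω', cfg ω = cfg ω' → ∀ (g : Fin G), ∀ t ∈ Finset.Icc 1 T,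
      ε ω g t = ε ω' g t := by
    intro ω ω' hconf
    have hzero : ∑ g, ∑ t ∈ Finset.Icc 1 T, N g t * (ε ω g t - ε ω' g t) ^ 2 = 0 := by
      have hterm : ∀ g, ∀ t ∈ Finset.Icc 1 T,
          N g t * (ε ω g t - ε ω' g t) ^ 2
          = N g t * (ε ω' g t * ((a0 ω - a0 ω') + (fun g => c0 ω g - c0 ω' g) g
              + (fun t => v0 ω t - v0 ω' t) t + (z0 ω - z0 ω') * d2R g t ω'))
          - N g t * (ε ω g t * ((a0 ω - a0 ω') + (fun g => c0 ω g - c0 ω' g) g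
              + (fun t => v0 ω t - v0 ω' t) t + (z0 ω - z0 ω') * d2R g t ω)) := by
        intro g t ht
        obtain ⟨h1, h2⟩ := hdeq ω ω' hconf g t ht
        simp only []
        rw [hε ω g t, hε ω' g t, ← h1, ← h2]
        ring
      rw [Finset.sum_congr rfl fun g _ => Finset.sum_congr rfl (hterm g),
        Finset.sum_congr rfl fun g _ => Finset.sum_sub_distrib _ _, Finset.sum_sub_distrib,
        fsFOC ω' (a0 ω - a0 ω') (z0 ω - z0 ω') _ _,
        fsFOC ω (a0 ω - a0 ω') (z0 ω - z0 ω') _ _, sub_zero]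
    have hsq : ∀ g, ∀ t ∈ Finset.Icc 1 T, N g t * (ε ω g t - ε ω' g t) ^ 2 = 0 := by
      have houter := (Finset.sum_eq_zero_iff_of_nonneg (fun g _ => Finset.sum_nonneg
        (fun t _ => mul_nonneg (hN g t).le (sq_nonneg _)))).mp hzero
      intro g t ht
      exact (Finset.sum_eq_zero_iff_of_nonneg
        (fun t _ => mul_nonneg (hN g t).le (sq_nonneg _))).mp
        (houter g (Finset.mem_univ g)) t ht
    intro g t ht
    have h0 := hsq g t ht
    have h1 := (mul_eq_zero.mp h0).resolve_left (hN g t).ne'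
    have h2 := (pow_eq_zero_iff two_ne_zero).mp h1
    exact sub_eq_zero.mp h2
  have hN1eq : ∀ ω ω', cfg ω = cfg ω' → N1 ω = N1 ω' := by
    intro ω ω' hconf
    rw [hN1, hN1]
    exact Finset.sum_congr rfl fun g _ => Finset.sum_congr rfl fun t ht => by
      rw [(hdeq ω ω' hconf g t ht).1]
  have hεbareq : ∀ ω ω', cfg ω = cfg ω' → εbar ω = εbar ω' := by
    intro ω ω' hconf
    rw [hεbar, hεbar, hN1eq ω ω' hconf]
    exact Finset.sum_congr rfl fun g _ => Finset.sum_congr rfl fun t ht => by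
      rw [(hdeq ω ω' hconf g t ht).1, hεeq ω ω' hconf g t ht]
  have hWeq : ∀ ω ω', cfg ω = cfg ω' → ∀ (g : Fin G), ∀ k ∈ Finset.Icc 2 T,
      W g k ω = W g k ω' := by
    intro ω ω' hconf g k hk
    rw [Finset.mem_Icc] at hk
    simp only [hWdef]
    rw [hN1eq ω ω' hconf, hεbareq ω ω' hconf]
    congr 1
    refine Finset.sum_congr rfl fun t ht => ?_
    rw [Finset.mem_Icc] at ht
    rw [hεeq ω ω' hconf g t (Finset.mem_Icc.mpr ⟨by omega, ht.2⟩)]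
  -- representation of W as a simple function of the configuration
  set F : Fin G → ℕ → (Fin G → Fin (T + 1) → Bool × Bool) → ℝ :=
    fun g k v => if hv : ∃ ω, cfg ω = v then W g k hv.choose else 0 with hFdef
  have hWrep : ∀ (g : Fin G), ∀ k ∈ Finset.Icc 2 T, ∀ ω, W g k ω = F g k (cfg ω) := by
    intro g k hk ω
    have hv : ∃ ω', cfg ω' = cfg ω := ⟨ω, rfl⟩
    simp only [hFdef]
    rw [dif_pos hv]
    exact (hWeq _ _ hv.choose_spec g k hk).symm
  -- events
  set Av : (Fin G → Fin (T + 1) → Bool × Bool) → Set Ω := fun v => {ω | cfg ω = v} with hAvdef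
  set Ag : Fin G → (Fin G → Fin (T + 1) → Bool × Bool) → Set Ω :=
    fun g v => {ω | cfg ω g = v g} with hAgdef
  set Bg : Fin G → (Fin G → Fin (T + 1) → Bool × Bool) → Set Ω :=
    fun g v => {ω | ∀ j : {x // x ∈ (({g} : Finset (Fin G))ᶜ : Finset (Fin G))},
      cfg ω (j : Fin G) = v (j : Fin G)} with hBgdef
  have hcfgg_meas : ∀ g : Fin G, Measurable (fun ω => cfg ω g) := by
    intro g
    exact measurable_pi_lambda _ fun i => ((hD1meas g (i : ℕ)).prodMk (hD2meas g (i : ℕ)))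
  have hAgmeas : ∀ g v, MeasurableSet (Ag g v) := by
    intro g v
    exact (hcfgg_meas g) (measurableSet_singleton (v g))
  have hBgmeas : ∀ g v, MeasurableSet (Bg g v) := by
    intro g v
    have : Bg g v = ⋂ j : {x // x ∈ (({g} : Finset (Fin G))ᶜ : Finset (Fin G))},
        Ag (j : Fin G) v := by
      ext ω
      simp only [hBgdef, hAgdef, Set.mem_iInter, Set.mem_setOf_eq]
    rw [this]
    exact MeasurableSet.iInter fun j => hAgmeas _ v
  have hAveq : ∀ (g : Fin G) v, Av v = Ag g v ∩ Bg g v := by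
    intro g v
    ext ω
    simp only [hAvdef, hAgdef, hBgdef, Set.mem_inter_iff, Set.mem_setOf_eq]
    constructor
    · intro h
      exact ⟨congrFun h g, fun j => congrFun h j⟩
    · rintro ⟨h1, h2⟩
      funext g'
      by_cases hg' : g' = g
      · rw [hg']; exact h1
      · exact h2 ⟨g', by simp [Finset.mem_compl, Finset.mem_singleton, hg']⟩
  have hAvmeas : ∀ v, MeasurableSet (Av v) := by
    intro v
    rw [hAveq g₀ v]
    exact (hAgmeas g₀ v).inter (hBgmeas g₀ v)
  -- measurability with respect to the treatment σ-algebra of group g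
  have hAgmDg : ∀ g v, MeasurableSet[mDg g] (Ag g v) := by
    intro g v
    rw [hmDg g]
    refine MeasurableSpace.measurableSet_comap.mpr
      ⟨(fun f : ℕ → Bool × Bool => fun i : Fin (T + 1) => f (i : ℕ)) ⁻¹' {v g}, ?_, ?_⟩
    · have hm : Measurable (fun f : ℕ → Bool × Bool => fun i : Fin (T + 1) => f (i : ℕ)) :=
        measurable_pi_lambda _ fun i => measurable_pi_apply (i : ℕ)
      exact hm (measurableSet_singleton (v g))
    · rfl
  have hle : ∀ g : Fin G, mDg g ≤ inst := by
    intro g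
    rw [hmDg g]
    exact Measurable.comap_le
      (measurable_pi_lambda _ fun t => (hD1meas g t).prodMk (hD2meas g t))
  have hfmeas : ∀ g : Fin G, Measurable (fun ω : Ω =>
      ((fun t : ℕ => (D1 g t ω, D2 g t ω)), (fun (t : ℕ) (d d2 : Bool) => po g t d d2 ω))) := by
    intro g
    refine Measurable.prodMk ?_ ?_
    · exact measurable_pi_lambda _ fun t => (hD1meas g t).prodMk (hD2meas g t)
    · exact measurable_pi_lambda _ fun t => measurable_pi_lambda _ fun d =>
        measurable_pi_lambda _ fun d2 => hpomeas g t d d2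
  have hkey : ∀ (g : Fin G) (k : ℕ), 2 ≤ k → k ≤ T → ∀ v,
      ∫ ω in Av v, (po g k false false ω - po g (k - 1) false false ω) ∂μ
        = c k * (μ (Av v)).toReal := by
    intro g k hk2 hkT v
    set Δf : Ω → ℝ := fun ω => po g k false false ω - po g (k - 1) false false ω with hΔdef
    set χA : Ω → ℝ := (Ag g v).indicator (fun _ => (1:ℝ)) with hχA
    set χB : Ω → ℝ := (Bg g v).indicator (fun _ => (1:ℝ)) with hχB
    have hχAmeas : Measurable χA := measurable_const.indicator (hAgmeas g v)
    have hχBmeas : Measurable χB := measurable_const.indicator (hBgmeas g v)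
    have hIF := hindep.indepFun_finset {g} (({g} : Finset (Fin G))ᶜ)
      disjoint_compl_right hfmeas
    set gS : {x // x ∈ ({g} : Finset (Fin G))} := ⟨g, Finset.mem_singleton_self g⟩ with hgS
    set SA : Set (∀ _i : {x // x ∈ ({g} : Finset (Fin G))},
        (ℕ → Bool × Bool) × (ℕ → Bool → Bool → ℝ)) :=
      {q | (fun i : Fin (T + 1) => (q gS).1 (i : ℕ)) = v g} with hSA
    set SB : Set (∀ _j : {x // x ∈ (({g} : Finset (Fin G))ᶜ : Finset (Fin G))},
        (ℕ → Bool × Bool) × (ℕ → Bool → Bool → ℝ)) :=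
      {q | ∀ j, (fun i : Fin (T + 1) => (q j).1 (i : ℕ)) = v (j : Fin G)} with hSB
    have hSAmeas : MeasurableSet SA := by
      have hm : Measurable (fun q : (∀ _i : {x // x ∈ ({g} : Finset (Fin G))},
          (ℕ → Bool × Bool) × (ℕ → Bool → Bool → ℝ)) =>
          fun i : Fin (T + 1) => (q gS).1 (i : ℕ)) :=
        measurable_pi_lambda _ fun i =>
          (measurable_pi_apply (i : ℕ)).comp (measurable_fst.comp (measurable_pi_apply gS))
      exact hm (measurableSet_singleton (v g))
    have hSBmeas : MeasurableSet SB := by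
      have hSBeq : SB = ⋂ j, {q : (∀ _j : {x // x ∈ (({g} : Finset (Fin G))ᶜ : Finset (Fin G))},
          (ℕ → Bool × Bool) × (ℕ → Bool → Bool → ℝ)) |
          (fun i : Fin (T + 1) => (q j).1 (i : ℕ)) = v (j : Fin G)} := by
        ext q
        simp only [hSB, Set.mem_iInter, Set.mem_setOf_eq]
      rw [hSBeq]
      refine MeasurableSet.iInter fun j => ?_
      have hm : Measurable (fun q : (∀ _j : {x // x ∈ (({g} : Finset (Fin G))ᶜ : Finset (Fin G))},
          (ℕ → Bool × Bool) × (ℕ → Bool → Bool → ℝ)) =>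
          fun i : Fin (T + 1) => (q j).1 (i : ℕ)) :=
        measurable_pi_lambda _ fun i =>
          (measurable_pi_apply (i : ℕ)).comp (measurable_fst.comp (measurable_pi_apply j))
      exact hm (measurableSet_singleton (v (j : Fin G)))
    set φ : (∀ _i : {x // x ∈ ({g} : Finset (Fin G))},
        (ℕ → Bool × Bool) × (ℕ → Bool → Bool → ℝ)) → ℝ :=
      fun q => ((q gS).2 k false false - (q gS).2 (k - 1) false false)
        * SA.indicator (fun _ => (1:ℝ)) q with hφ
    set φ0 : (∀ _i : {x // x ∈ ({g} : Finset (Fin G))},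
        (ℕ → Bool × Bool) × (ℕ → Bool → Bool → ℝ)) → ℝ :=
      fun q => SA.indicator (fun _ => (1:ℝ)) q with hφ0
    set ψ : (∀ _j : {x // x ∈ (({g} : Finset (Fin G))ᶜ : Finset (Fin G))},
        (ℕ → Bool × Bool) × (ℕ → Bool → Bool → ℝ)) → ℝ :=
      fun q => SB.indicator (fun _ => (1:ℝ)) q with hψ
    have hφmeas : Measurable φ := by
      rw [hφ]
      refine Measurable.mul ?_ (measurable_const.indicator hSAmeas)
      fun_prop
    have hφ0meas : Measurable φ0 := measurable_const.indicator hSAmeas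
    have hψmeas : Measurable ψ := measurable_const.indicator hSBmeas
    -- identify the compositions
    have hcompA : ∀ ω, φ ((fun (a : Ω) (i : {x // x ∈ ({g} : Finset (Fin G))}) =>
        ((fun t : ℕ => (D1 (i : Fin G) t a, D2 (i : Fin G) t a)),
         (fun (t : ℕ) (d d2 : Bool) => po (i : Fin G) t d d2 a))) ω) = Δf ω * χA ω := by
      intro ω
      simp only [hφ, hΔdef, hχA, Set.indicator_apply]
      all_goals first
      | rfl
      | exact congrArg₂ (fun x y : ℝ => x * y) rfl (if_congr Iff.rfl rfl rfl)
    have hcompA0 : ∀ ω, φ0 ((fun (a : Ω) (i : {x // x ∈ ({g} : Finset (Fin G))}) =>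
        ((fun t : ℕ => (D1 (i : Fin G) t a, D2 (i : Fin G) t a)),
         (fun (t : ℕ) (d d2 : Bool) => po (i : Fin G) t d d2 a))) ω) = χA ω := by
      intro ω
      simp only [hφ0, hχA, Set.indicator_apply]
      all_goals first
      | rfl
      | exact if_congr Iff.rfl rfl rfl
    have hcompB : ∀ ω, ψ ((fun (a : Ω)
        (j : {x // x ∈ (({g} : Finset (Fin G))ᶜ : Finset (Fin G))}) =>
        ((fun t : ℕ => (D1 (j : Fin G) t a, D2 (j : Fin G) t a)),
         (fun (t : ℕ) (d d2 : Bool) => po (j : Fin G) t d d2 a))) ω) = χB ω := by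
      intro ω
      simp only [hψ, hχB, Set.indicator_apply]
      all_goals first
      | rfl
      | exact if_congr Iff.rfl rfl rfl
    have hIndep1 : IndepFun (fun ω => Δf ω * χA ω) χB μ := by
      refine (hIF.comp hφmeas hψmeas).congr ?_ ?_
      · exact Filter.Eventually.of_forall fun ω => hcompA ω
      · exact Filter.Eventually.of_forall fun ω => hcompB ω
    have hIndep0 : IndepFun χA χB μ := by
      refine (hIF.comp hφ0meas hψmeas).congr ?_ ?_
      · exact Filter.Eventually.of_forall fun ω => hcompA0 ω
      · exact Filter.Eventually.of_forall fun ω => hcompB ω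
    -- integrals of the factors
    have hEA : ∫ ω, Δf ω * χA ω ∂μ = c k * (μ (Ag g v)).toReal := by
      have hptA : ∀ ω, Δf ω * χA ω = (Ag g v).indicator Δf ω := by
        intro ω
        by_cases h : ω ∈ Ag g v
        · rw [Set.indicator_of_mem h, hχA, Set.indicator_of_mem h, mul_one]
        · rw [Set.indicator_of_notMem h, hχA, Set.indicator_of_notMem h, mul_zero]
      rw [integral_congr_ae (Filter.Eventually.of_forall hptA),
        integral_indicator (hAgmeas g v)]
      haveI : SigmaFinite (μ.trim (hle g)) := inferInstance
      calc ∫ ω in Ag g v, Δf ω ∂μ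
          = ∫ ω in Ag g v, (μ[Δf | mDg g]) ω ∂μ :=
            (setIntegral_condExp (hle g) (hΔint g k) (hAgmDg g v)).symm
        _ = ∫ _ω in Ag g v, (∫ ω', Δf ω' ∂μ) ∂μ :=
            integral_congr_ae (ae_restrict_of_ae (hexo g k hk2 hkT))
        _ = (μ (Ag g v)).toReal • (∫ ω', Δf ω' ∂μ) := setIntegral_const _
        _ = c k * (μ (Ag g v)).toReal := by
            rw [smul_eq_mul, show (∫ ω', Δf ω' ∂μ) = c k from hceq g k hk2 hkT]
            ring
    have hEB : ∫ ω, χB ω ∂μ = (μ (Bg g v)).toReal := by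
      rw [hχB]
      exact integral_indicator_one (hBgmeas g v)
    have hmul1 : ∫ ω, Δf ω * χA ω * χB ω ∂μ
        = (∫ ω, Δf ω * χA ω ∂μ) * ∫ ω, χB ω ∂μ := by
      have h := hIndep1.integral_mul_eq_mul_integral
        (((hΔmeas g k).mul hχAmeas).aestronglyMeasurable) (hχBmeas.aestronglyMeasurable)
      simpa [Pi.mul_apply] using h
    have hmul0 : ∫ ω, χA ω * χB ω ∂μ = (μ (Ag g v)).toReal * (μ (Bg g v)).toReal := by
      have h := hIndep0.integral_mul_eq_mul_integral hχAmeas.aestronglyMeasurable hχBmeas.aestronglyMeasurable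
      have h2 : ∫ ω, χA ω ∂μ = (μ (Ag g v)).toReal := by
        rw [hχA]; exact integral_indicator_one (hAgmeas g v)
      calc ∫ ω, χA ω * χB ω ∂μ
          = (∫ ω, χA ω ∂μ) * ∫ ω, χB ω ∂μ := by simpa [Pi.mul_apply] using h
        _ = _ := by rw [h2, hEB]
    have hAvind : ∀ ω, χA ω * χB ω = (Av v).indicator (1 : Ω → ℝ) ω := by
      intro ω
      rw [hχA, hχB]
      by_cases h1 : ω ∈ Ag g v <;> by_cases h2 : ω ∈ Bg g v <;>
        simp [Set.indicator_apply, hAveq g v, Set.mem_inter_iff, h1, h2, Pi.one_apply]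
    have hμAv : (μ (Av v)).toReal = (μ (Ag g v)).toReal * (μ (Bg g v)).toReal := by
      rw [← hmul0, integral_congr_ae (Filter.Eventually.of_forall hAvind),
        integral_indicator_one (hAvmeas v)]; rfl
    have hΔAvind : ∀ ω, Δf ω * χA ω * χB ω = (Av v).indicator Δf ω := by
      intro ω
      by_cases hv' : ω ∈ Av v
      · have h12 := hv'
        rw [hAveq g v] at h12
        rw [Set.indicator_of_mem hv', hχA, hχB, Set.indicator_of_mem h12.1,
          Set.indicator_of_mem h12.2, mul_one, mul_one]
      · rw [Set.indicator_of_notMem hv']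
        rw [hAveq g v] at hv'
        by_cases h1 : ω ∈ Ag g v
        · have h2 : ω ∉ Bg g v := fun h2 => hv' ⟨h1, h2⟩
          rw [hχB, Set.indicator_of_notMem h2, mul_zero]
        · rw [hχA, Set.indicator_of_notMem h1, mul_zero, zero_mul]
    calc ∫ ω in Av v, Δf ω ∂μ
        = ∫ ω, (Av v).indicator Δf ω ∂μ := (integral_indicator (hAvmeas v)).symm
      _ = ∫ ω, Δf ω * χA ω * χB ω ∂μ :=
          (integral_congr_ae (Filter.Eventually.of_forall hΔAvind)).symm
      _ = (∫ ω, Δf ω * χA ω ∂μ) * ∫ ω, χB ω ∂μ := hmul1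
      _ = c k * ((μ (Ag g v)).toReal * (μ (Bg g v)).toReal) := by rw [hEA, hEB]; ring
      _ = c k * (μ (Av v)).toReal := by rw [hμAv]
  -- indicator-sum representation of W
  have hrep : ∀ (g : Fin G), ∀ k ∈ Finset.Icc 2 T, ∀ ω,
      W g k ω = ∑ v, (Av v).indicator (fun _ => F g k v) ω := by
    intro g k hk ω
    have hite : ∀ v, (Av v).indicator (fun _ => F g k v) ω
        = if cfg ω = v then F g k v else 0 := by
      intro v
      by_cases h : cfg ω = v
      · rw [Set.indicator_of_mem (show ω ∈ Av v from h), if_pos h]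
      · rw [Set.indicator_of_notMem (show ω ∉ Av v from h), if_neg h]
    rw [hWrep g k hk ω, Finset.sum_congr rfl fun v _ => hite v,
      Finset.sum_ite_eq Finset.univ (cfg ω) (fun v => F g k v), if_pos (Finset.mem_univ _)]
  have hrepΔ : ∀ (g : Fin G), ∀ k ∈ Finset.Icc 2 T, ∀ ω,
      (po g k false false ω - po g (k - 1) false false ω) * W g k ω
      = ∑ v, (Av v).indicator
          (fun ω' => (po g k false false ω' - po g (k - 1) false false ω') * F g k v) ω := by
    intro g k hk ω
    rw [hrep g k hk ω, Finset.mul_sum]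
    refine Finset.sum_congr rfl fun v _ => ?_
    by_cases h : ω ∈ Av v
    · rw [Set.indicator_of_mem h, Set.indicator_of_mem h]
    · rw [Set.indicator_of_notMem h, Set.indicator_of_notMem h, mul_zero]
  have hWint : ∀ (g : Fin G), ∀ k ∈ Finset.Icc 2 T, Integrable (W g k) μ := by
    intro g k hk
    exact (integrable_finset_sum Finset.univ fun v _ =>
        (integrable_const (F g k v)).indicator (hAvmeas v)).congr
      (Filter.Eventually.of_forall fun ω => (hrep g k hk ω).symm)
  have hΔWint : ∀ (g : Fin G), ∀ k ∈ Finset.Icc 2 T,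
      Integrable (fun ω => (po g k false false ω - po g (k - 1) false false ω) * W g k ω)
        μ := by
    intro g k hk
    exact (integrable_finset_sum Finset.univ fun v _ =>
        ((hΔint g k).mul_const (F g k v)).indicator (hAvmeas v)).congr
      (Filter.Eventually.of_forall fun ω => (hrepΔ g k hk ω).symm)
  have hMain : ∀ (g : Fin G), ∀ k ∈ Finset.Icc 2 T,
      ∫ ω, (po g k false false ω - po g (k - 1) false false ω) * W g k ω ∂μ
        = c k * ∫ ω, W g k ω ∂μ := by
    intro g k hk
    have hk' := Finset.mem_Icc.mp hk
    have hWrepr : ∫ ω, W g k ω ∂μ = ∑ v, F g k v * (μ (Av v)).toReal := by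
      rw [integral_congr_ae (Filter.Eventually.of_forall (hrep g k hk)),
        integral_finset_sum Finset.univ
          (fun v _ => (integrable_const (F g k v)).indicator (hAvmeas v))]
      refine Finset.sum_congr rfl fun v _ => ?_
      rw [integral_indicator (hAvmeas v), setIntegral_const, smul_eq_mul]
      exact mul_comm _ _
    have hΔWrepr : ∫ ω, (po g k false false ω - po g (k - 1) false false ω) * W g k ω ∂μ
        = ∑ v, F g k v * (c k * (μ (Av v)).toReal) := by
      rw [integral_congr_ae (Filter.Eventually.of_forall (hrepΔ g k hk)),
        integral_finset_sum Finset.univ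
          (fun v _ => ((hΔint g k).mul_const (F g k v)).indicator (hAvmeas v))]
      refine Finset.sum_congr rfl fun v _ => ?_
      rw [integral_indicator (hAvmeas v), MeasureTheory.integral_mul_const,
        hkey g k hk'.1 hk'.2 v]
      ring
    rw [hΔWrepr, hWrepr, Finset.mul_sum]
    exact Finset.sum_congr rfl fun v _ => by ring
  have hWsum0 : ∀ k ∈ Finset.Icc 2 T, ∀ ω, ∑ g, W g k ω = 0 := by
    intro k hk ω
    simp only [hWdef]
    have h0 : ∀ t ∈ Finset.Icc k T, ∑ g, N g t * ε ω g t = 0 := by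
      intro t ht
      have ht' := Finset.mem_Icc.mp ht
      have hk' := Finset.mem_Icc.mp hk
      exact fsTime ω t (Finset.mem_Icc.mpr ⟨by omega, ht'.2⟩)
    rw [← Finset.sum_div, Finset.sum_comm, Finset.sum_congr rfl h0,
      Finset.sum_const_zero, zero_div]
  -- final assembly
  rw [integral_congr_ae hpt',
    integral_add (integrable_const δ1)
      (integrable_finset_sum _ fun k hk => integrable_finset_sum _ fun g _ => hΔWint g k hk),
    integral_const,
    integral_finset_sum _ (fun k hk => integrable_finset_sum _ fun g _ => hΔWint g k hk)]
  have hzero : ∀ k ∈ Finset.Icc 2 T,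
      ∫ ω, ∑ g, (po g k false false ω - po g (k - 1) false false ω) * W g k ω ∂μ = 0 := by
    intro k hk
    rw [integral_finset_sum _ (fun g _ => hΔWint g k hk),
      Finset.sum_congr rfl (fun g _ => hMain g k hk), ← Finset.mul_sum,
      ← integral_finset_sum _ (fun g _ => hWint g k hk),
      integral_congr_ae (Filter.Eventually.of_forall (hWsum0 k hk)),
      integral_zero, mul_zero]
  rw [Finset.sum_congr rfl hzero, Finset.sum_const_zero, add_zero]
  simp [measure_univ]
end

section
/- Let the set 𝒮 of switching cells be 𝒮 = {(g,t): t≥2, D^1_{g,t}≠D^1_{g,t−1}, D^{-1}_{g,t}=D^{-1}_{g,t−1}, and ∃g' with D^1_{g',t}=D^1_{g',t−1}=D^1_{g,t−1} and D^{-1}_{g',t}=D^{-1}_{g',t−1}=D^{-1}_{g,t−1}}, with N_𝒮 = Σ_{(g,t)∈𝒮} N_{g,t}. Suppose strong exogeneity and common trends hold for all potential outcomes: for every 𝐝 ∈ {0,1}^K and t≥2, E[Y_{g,t}(𝐝)−Y_{g,t−1}(𝐝)|𝐃] is a number ψ_{𝐝,t} not depending on g. Then the estimator DID_M defined as the weighted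 average over t and 𝐝_{−1} of DID_{+,𝐝_{−1},t} (comparing switchers-in to stable cells with the same other treatments) and DID_{−,𝐝_{−1},t} (comparing stable-treated to switchers-out), with weights N_{1,0,𝐝_{−1},t}/N_𝒮 and N_{0,1,𝐝_{−1},t}/N_𝒮, satisfies E[DID_M] = δ^𝒮, the average over cells in 𝒮 of the effect of moving treatment 1 from 0 to 1 holding the other treatments fixed. -/
open Finset MeasureTheory
open scoped Classical

section DIDMAux

variable {G Km1 : ℕ} {Ω : Type}

/-- The event that cell `(g,t)` has treatment path `(d, d')` and other treatments `dm`. -/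
def prc (D1 : Fin G → ℕ → Ω → Bool) (Dm : Fin G → ℕ → Ω → Fin Km1 → Bool)
    (g : Fin G) (d d' : Bool) (dm : Fin Km1 → Bool) (t : ℕ) (ω : Ω) : Prop :=
  D1 g t ω = d ∧ D1 g (t - 1) ω = d' ∧ Dm g t ω = dm ∧ Dm g (t - 1) ω = dm

/-- Weight of a matched switcher-in. -/
noncomputable def cIn (D1 : Fin G → ℕ → Ω → Bool) (Dm : Fin G → ℕ → Ω → Fin Km1 → Bool)
    (N : Fin G → ℕ → ℝ) (NS : Ω → ℝ)
    (Ncnt : Bool → Bool → (Fin Km1 → Bool) → ℕ → Ω → ℝ)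
    (g : Fin G) (t : ℕ) (dm : Fin Km1 → Bool) (ω : Ω) : ℝ :=
  if prc D1 Dm g true false dm t ω ∧ Ncnt false false dm t ω ≠ 0 then N g t / NS ω else 0

/-- Weight of a stable untreated cell. -/
noncomputable def c00 (D1 : Fin G → ℕ → Ω → Bool) (Dm : Fin G → ℕ → Ω → Fin Km1 → Bool)
    (N : Fin G → ℕ → ℝ) (NS : Ω → ℝ)
    (Ncnt : Bool → Bool → (Fin Km1 → Bool) → ℕ → Ω → ℝ)
    (g : Fin G) (t : ℕ) (dm : Fin Km1 → Bool) (ω : Ω) : ℝ :=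
  if (Ncnt true false dm t ω ≠ 0 ∧ Ncnt false false dm t ω ≠ 0) ∧ prc D1 Dm g false false dm t ω
  then Ncnt true false dm t ω / NS ω * (N g t / Ncnt false false dm t ω) else 0

/-- Weight of a stable treated cell. -/
noncomputable def c11 (D1 : Fin G → ℕ → Ω → Bool) (Dm : Fin G → ℕ → Ω → Fin Km1 → Bool)
    (N : Fin G → ℕ → ℝ) (NS : Ω → ℝ)
    (Ncnt : Bool → Bool → (Fin Km1 → Bool) → ℕ → Ω → ℝ)
    (g : Fin G) (t : ℕ) (dm : Fin Km1 → Bool) (ω : Ω) : ℝ :=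
  if (Ncnt true true dm t ω ≠ 0 ∧ Ncnt false true dm t ω ≠ 0) ∧ prc D1 Dm g true true dm t ω
  then Ncnt false true dm t ω / NS ω * (N g t / Ncnt true true dm t ω) else 0

/-- Weight of a matched switcher-out. -/
noncomputable def cOut (D1 : Fin G → ℕ → Ω → Bool) (Dm : Fin G → ℕ → Ω → Fin Km1 → Bool)
    (N : Fin G → ℕ → ℝ) (NS : Ω → ℝ)
    (Ncnt : Bool → Bool → (Fin Km1 → Bool) → ℕ → Ω → ℝ)
    (g : Fin G) (t : ℕ) (dm : Fin Km1 → Bool) (ω : Ω) : ℝ :=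
  if prc D1 Dm g false true dm t ω ∧ Ncnt true true dm t ω ≠ 0 then N g t / NS ω else 0

end DIDMAux

private lemma didm_div_aux {a b c x : ℝ} (h : a ≠ 0) : a / b * (c / a * x) = c / b * x := by
  have e : a / b * (c / a * x) = a / a * (c / b * x) := by ring
  rw [e, div_self h, one_mul]

/-- Any function of the treatment paths (up to period `T`) is integrable, and multiplying it
by a function whose conditional expectation given the treatments is constant just multiplies
its integral by that constant. -/
private lemma didm_key
    {G T Km1 : ℕ} {Ω : Type} (mD : MeasurableSpace Ω) [inst : MeasurableSpace Ω]
    (μ : Measure Ω) [IsProbabilityMeasure μ]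
    (D1 : Fin G → ℕ → Ω → Bool) (Dm : Fin G → ℕ → Ω → Fin Km1 → Bool)
    (hD1meas : ∀ g t, Measurable (D1 g t)) (hDmmeas : ∀ g t, Measurable (Dm g t))
    (hmD : mD = MeasurableSpace.comap
      (fun ω => fun (g : Fin G) (t : ℕ) => (D1 g t ω, Dm g t ω)) inferInstance)
    (r : Ω → ℝ)
    (hdep : ∀ ω ω', (∀ (g : Fin G) (s : Fin (T+1)),
        D1 g s ω = D1 g s ω' ∧ Dm g s ω = Dm g s ω') → r ω = r ω') :
    Integrable r μ ∧
    ∀ (A : Ω → ℝ), Integrable A μ → Integrable (fun ω => r ω * A ω) μ ∧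
      ∀ (c : ℝ), (μ[A | mD] =ᵐ[μ] fun _ => c) →
      ∫ ω, r ω * A ω ∂μ = (∫ ω, r ω ∂μ) * c := by
  classical
  have hF : Measurable[inst] (fun ω => fun (g : Fin G) (t : ℕ) => (D1 g t ω, Dm g t ω)) :=
    measurable_pi_lambda _ fun g => measurable_pi_lambda _ fun t =>
      ((hD1meas g t).prodMk (hDmmeas g t))
  have hm : mD ≤ inst := by rw [hmD]; exact measurable_iff_comap_le.mp hF
  set ρ : Ω → (Fin G → Fin (T+1) → Bool × (Fin Km1 → Bool)) :=
    fun ω g s => (D1 g (s : ℕ) ω, Dm g (s : ℕ) ω) with hρ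
  have hρm : Measurable[mD] ρ := by
    have h1 : Measurable[mD] (fun ω => fun (g : Fin G) (t : ℕ) => (D1 g t ω, Dm g t ω)) := by
      rw [hmD]; exact measurable_iff_comap_le.mpr le_rfl
    rw [hρ]
    exact Measurable.comp (measurable_pi_lambda _ fun g => measurable_pi_lambda _ fun s =>
      (Measurable.comp (measurable_pi_apply ((s : Fin (T+1)) : ℕ)) (measurable_pi_apply g))) h1
  set κ : (Fin G → Fin (T+1) → Bool × (Fin Km1 → Bool)) → ℝ :=
    fun q => if h : ∃ ω, ρ ω = q then r h.choose else 0 with hκ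
  have hrκ : ∀ ω, r ω = κ (ρ ω) := by
    intro ω
    have hex : ∃ ω', ρ ω' = ρ ω := ⟨ω, rfl⟩
    rw [hκ]
    simp only [dif_pos hex]
    refine (hdep hex.choose ω fun g s => ?_).symm
    have := congrFun (congrFun hex.choose_spec g) s
    exact ⟨congrArg Prod.fst this, congrArg Prod.snd this⟩
  have hκmeas : Measurable κ := measurable_of_countable κ
  have hrmeasD : Measurable[mD] r := by
    have : r = κ ∘ ρ := funext hrκ
    rw [this]; exact hκmeas.comp hρm
  have hrmeas : Measurable[inst] r := hrmeasD.mono hm le_rfl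
  obtain ⟨C, hC⟩ : ∃ C, ∀ ω, ‖r ω‖ ≤ C := by
    refine ⟨∑ q : (Fin G → Fin (T+1) → Bool × (Fin Km1 → Bool)), ‖κ q‖, fun ω => ?_⟩
    rw [hrκ ω]
    exact Finset.single_le_sum (f := fun q => ‖κ q‖) (fun q _ => norm_nonneg _)
      (Finset.mem_univ _)
  have hrint : Integrable r μ :=
    Integrable.mono' (integrable_const C) hrmeas.aestronglyMeasurable (ae_of_all _ hC)
  refine ⟨hrint, fun A hA => ?_⟩
  haveI : SigmaFinite (μ.trim hm) := inferInstance
  have hrA : Integrable (r * A) μ := hA.bdd_mul hrmeas.aestronglyMeasurable (ae_of_all _ hC)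
  refine ⟨hrA, fun c hcond => ?_⟩
  have h2 : μ[r * A | mD] =ᵐ[μ] fun ω => r ω * c := by
    filter_upwards [condExp_mul_of_stronglyMeasurable_left hrmeasD.stronglyMeasurable hrA hA, hcond]
      with ω h h'
    rw [h, Pi.mul_apply, h']
  calc ∫ ω, r ω * A ω ∂μ = ∫ ω, (μ[r * A | mD]) ω ∂μ := (integral_condExp hm).symm
    _ = ∫ ω, r ω * c ∂μ := integral_congr_ae h2
    _ = (∫ ω, r ω ∂μ) * c := integral_mul_const c r

/-- Unbiasedness of the `DID_M` estimator with several treatments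
(Theorem 3). In a sharp design with `K` binary treatments, under strong
exogeneity and common trends for all potential outcomes (conditionally on all
treatments `𝐃`, the trend of every potential outcome is a constant `ψ` not
depending on `g`), the expectation of `DID_M` equals `δ^𝒮`, the average effect
across switching cells `𝒮` of moving the first treatment from 0 to 1 holding
the other treatments fixed. -/
theorem DIDM_unbiased_several_treatments
    (G T Km1 : ℕ) (hT : 2 ≤ T)
    {Ω : Type} [inst : MeasurableSpace Ω]
    (μ : Measure Ω) [IsProbabilityMeasure μ]
    (po : Fin G → ℕ → Bool → (Fin Km1 → Bool) → Ω → ℝ)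
    (hpomeas : ∀ g t d dm, Measurable (po g t d dm))
    (hpoint : ∀ g t d dm, Integrable (po g t d dm) μ)
    (D1 : Fin G → ℕ → Ω → Bool) (Dm : Fin G → ℕ → Ω → Fin Km1 → Bool)
    (hD1meas : ∀ g t, Measurable (D1 g t)) (hDmmeas : ∀ g t, Measurable (Dm g t))
    (Y : Fin G → ℕ → Ω → ℝ)
    (hY : ∀ g t ω, Y g t ω = po g t (D1 g t ω) (Dm g t ω) ω)
    (mD : MeasurableSpace Ω)
    (hmD : mD = MeasurableSpace.comap
      (fun ω => fun (g : Fin G) (t : ℕ) => (D1 g t ω, Dm g t ω)) inferInstance)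
    -- strong exogeneity and common trends for all potential outcomes
    (ψ : Bool → (Fin Km1 → Bool) → ℕ → ℝ)
    (hψ : ∀ (d : Bool) (dm : Fin Km1 → Bool) (t : ℕ), 2 ≤ t → t ≤ T → ∀ g,
      μ[fun ω => po g t d dm ω - po g (t - 1) d dm ω | mD]
        =ᵐ[μ] fun _ => ψ d dm t)
    (N : Fin G → ℕ → ℝ) (hN : ∀ g t, 0 < N g t)
    -- the set 𝒮 of switching cells with a matched stable group
    (S : Ω → Finset (Fin G × ℕ))
    (hS : ∀ ω g t, (g, t) ∈ S ω ↔ (2 ≤ t ∧ t ≤ T ∧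
      D1 g t ω ≠ D1 g (t - 1) ω ∧ Dm g t ω = Dm g (t - 1) ω ∧
      ∃ g', D1 g' t ω = D1 g' (t - 1) ω ∧ D1 g' t ω = D1 g (t - 1) ω ∧
        Dm g' t ω = Dm g' (t - 1) ω ∧ Dm g' t ω = Dm g (t - 1) ω))
    (NS : Ω → ℝ) (hNS : ∀ ω, NS ω = ∑ p ∈ S ω, N p.1 p.2)
    -- cell counts N_{d,d',𝐝₋₁,t}
    (Ncnt : Bool → Bool → (Fin Km1 → Bool) → ℕ → Ω → ℝ)
    (hNcnt : ∀ d d' dm t ω, Ncnt d d' dm t ω = ∑ g,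
      if D1 g t ω = d ∧ D1 g (t - 1) ω = d' ∧
        Dm g t ω = dm ∧ Dm g (t - 1) ω = dm then N g t else 0)
    -- DID⁺ and DID⁻, with the convention that they are 0 when undefined
    (DIDp DIDm : (Fin Km1 → Bool) → ℕ → Ω → ℝ)
    (hDIDp : ∀ dm t ω, DIDp dm t ω =
      if Ncnt true false dm t ω ≠ 0 ∧ Ncnt false false dm t ω ≠ 0 then
        (∑ g, if D1 g t ω = true ∧ D1 g (t - 1) ω = false ∧
            Dm g t ω = dm ∧ Dm g (t - 1) ω = dm then
          N g t / Ncnt true false dm t ω * (Y g t ω - Y g (t - 1) ω) else 0)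
        - (∑ g, if D1 g t ω = false ∧ D1 g (t - 1) ω = false ∧
            Dm g t ω = dm ∧ Dm g (t - 1) ω = dm then
          N g t / Ncnt false false dm t ω * (Y g t ω - Y g (t - 1) ω) else 0)
      else 0)
    (hDIDm : ∀ dm t ω, DIDm dm t ω =
      if Ncnt true true dm t ω ≠ 0 ∧ Ncnt false true dm t ω ≠ 0 then
        (∑ g, if D1 g t ω = true ∧ D1 g (t - 1) ω = true ∧
            Dm g t ω = dm ∧ Dm g (t - 1) ω = dm then
          N g t / Ncnt true true dm t ω * (Y g t ω - Y g (t - 1) ω) else 0)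
        - (∑ g, if D1 g t ω = false ∧ D1 g (t - 1) ω = true ∧
            Dm g t ω = dm ∧ Dm g (t - 1) ω = dm then
          N g t / Ncnt false true dm t ω * (Y g t ω - Y g (t - 1) ω) else 0)
      else 0)
    -- the DID_M estimator
    (DIDM : Ω → ℝ)
    (hDIDM : ∀ ω, DIDM ω =
      if NS ω ≠ 0 then
        ∑ t ∈ Finset.Icc 2 T, ∑ dm : Fin Km1 → Bool,
          (Ncnt true false dm t ω / NS ω * DIDp dm t ω
            + Ncnt false true dm t ω / NS ω * DIDm dm t ω)
      else 0)
    -- the target parameter δ^𝒮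
    (δS : ℝ)
    (hδS : δS = ∫ ω, (if NS ω ≠ 0 then
      (1 / NS ω) * ∑ p ∈ S ω, N p.1 p.2 *
        (po p.1 p.2 true (Dm p.1 p.2 ω) ω - po p.1 p.2 false (Dm p.1 p.2 ω) ω)
      else 0) ∂μ)
    (hDIDMint : Integrable DIDM μ)
    (hδSint : Integrable (fun ω => if NS ω ≠ 0 then
      (1 / NS ω) * ∑ p ∈ S ω, N p.1 p.2 *
        (po p.1 p.2 true (Dm p.1 p.2 ω) ω - po p.1 p.2 false (Dm p.1 p.2 ω) ω)
      else 0) μ) :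
    ∫ ω, DIDM ω ∂μ = δS := by
  classical
  -- ## basic facts about the counts
  have hNcnt' : ∀ d d' dm t ω, Ncnt d d' dm t ω
      = ∑ g, if prc D1 Dm g d d' dm t ω then N g t else 0 := by
    intro d d' dm t ω; rw [hNcnt]
    exact Finset.sum_congr rfl fun g _ => if_congr Iff.rfl rfl rfl
  have hNcnt_ne : ∀ d d' dm t ω, Ncnt d d' dm t ω ≠ 0 ↔ ∃ g, prc D1 Dm g d d' dm t ω := by
    intro d d' dm t ω
    rw [hNcnt', Ne, Finset.sum_eq_zero_iff_of_nonneg (fun g _ => by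
      split_ifs with h; exacts [(hN g t).le, le_rfl])]
    push_neg
    constructor
    · rintro ⟨g, -, hg⟩
      by_cases h : prc D1 Dm g d d' dm t ω
      · exact ⟨g, h⟩
      · rw [if_neg h] at hg; exact absurd rfl hg
    · rintro ⟨g, hg⟩
      exact ⟨g, Finset.mem_univ g, by rw [if_pos hg]; exact (hN g t).ne'⟩
  have hS_sub : ∀ ω, S ω ⊆ Finset.univ ×ˢ Finset.Icc 2 T := by
    rintro ω ⟨g, t⟩ hp
    obtain ⟨h1, h2, -⟩ := (hS ω g t).mp hp
    simp [Finset.mem_product, Finset.mem_Icc, h1, h2]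
  have hS_empty : ∀ ω, NS ω = 0 → S ω = ∅ := by
    intro ω h
    by_contra hne
    have hpos : 0 < ∑ p ∈ S ω, N p.1 p.2 :=
      Finset.sum_pos (fun p _ => hN p.1 p.2) (Finset.nonempty_of_ne_empty hne)
    rw [hNS ω] at h; linarith
  -- ## pointwise decomposition of DID⁺ and DID⁻
  have hAplus : ∀ t dm ω,
      Ncnt true false dm t ω / NS ω * DIDp dm t ω
        = ∑ g, (cIn D1 Dm N NS Ncnt g t dm ω *
              ((po g t true dm ω - po g t false dm ω)
                + (po g t false dm ω - po g (t - 1) false dm ω))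
            - c00 D1 Dm N NS Ncnt g t dm ω *
              (po g t false dm ω - po g (t - 1) false dm ω)) := by
    intro t dm ω
    rw [hDIDp]
    split_ifs with hcond
    · obtain ⟨h10, h00⟩ := hcond
      rw [mul_sub, Finset.mul_sum, Finset.mul_sum, ← Finset.sum_sub_distrib]
      refine Finset.sum_congr rfl fun g _ => ?_
      simp only [cIn, c00]
      by_cases hin : prc D1 Dm g true false dm t ω
      · obtain ⟨e1, e2, e3, e4⟩ := hin
        have h0g : ¬ prc D1 Dm g false false dm t ω := fun hp =>
          Bool.noConfusion (e1.symm.trans hp.1)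
        rw [if_pos (show D1 g t ω = true ∧ D1 g (t - 1) ω = false ∧ Dm g t ω = dm ∧
              Dm g (t - 1) ω = dm from ⟨e1, e2, e3, e4⟩),
          if_neg (show ¬(D1 g t ω = false ∧ D1 g (t - 1) ω = false ∧ Dm g t ω = dm ∧ Dm g (t - 1) ω = dm) from fun hp => h0g hp),
          if_pos (show prc D1 Dm g true false dm t ω ∧ Ncnt false false dm t ω ≠ 0 from
            ⟨⟨e1, e2, e3, e4⟩, h00⟩),
          if_neg (show ¬((Ncnt true false dm t ω ≠ 0 ∧ Ncnt false false dm t ω ≠ 0) ∧ prc D1 Dm g false false dm t ω) from fun hp => h0g hp.2),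
          hY g t ω, hY g (t - 1) ω, e1, e2, e3, e4, didm_div_aux h10]
        ring
      · by_cases h0g : prc D1 Dm g false false dm t ω
        · obtain ⟨e1, e2, e3, e4⟩ := h0g
          rw [if_neg (show ¬(D1 g t ω = true ∧ D1 g (t - 1) ω = false ∧ Dm g t ω = dm ∧ Dm g (t - 1) ω = dm) from fun hp => hin hp),
            if_pos (show D1 g t ω = false ∧ D1 g (t - 1) ω = false ∧ Dm g t ω = dm ∧ Dm g (t - 1) ω = dm from ⟨e1, e2, e3, e4⟩),
            if_neg (show ¬(prc D1 Dm g true false dm t ω ∧ Ncnt false false dm t ω ≠ 0) from fun hp => hin hp.1),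
            if_pos (show (Ncnt true false dm t ω ≠ 0 ∧ Ncnt false false dm t ω ≠ 0) ∧
              prc D1 Dm g false false dm t ω from ⟨⟨h10, h00⟩, ⟨e1, e2, e3, e4⟩⟩),
            hY g t ω, hY g (t - 1) ω, e1, e2, e3, e4]
          ring
        · rw [if_neg (show ¬(D1 g t ω = true ∧ D1 g (t - 1) ω = false ∧ Dm g t ω = dm ∧ Dm g (t - 1) ω = dm) from fun hp => hin hp),
            if_neg (show ¬(D1 g t ω = false ∧ D1 g (t - 1) ω = false ∧ Dm g t ω = dm ∧ Dm g (t - 1) ω = dm) from fun hp => h0g hp),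
            if_neg (show ¬(prc D1 Dm g true false dm t ω ∧ Ncnt false false dm t ω ≠ 0) from fun hp => hin hp.1),
            if_neg (show ¬((Ncnt true false dm t ω ≠ 0 ∧ Ncnt false false dm t ω ≠ 0) ∧ prc D1 Dm g false false dm t ω) from fun hp => h0g hp.2)]
          ring
    · rw [mul_zero]
      symm
      refine Finset.sum_eq_zero fun g _ => ?_
      simp only [cIn, c00]
      rw [if_neg (show ¬(prc D1 Dm g true false dm t ω ∧ Ncnt false false dm t ω ≠ 0) from
          fun hp => hcond ⟨(hNcnt_ne true false dm t ω).mpr ⟨g, hp.1⟩, hp.2⟩),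
        if_neg (show ¬((Ncnt true false dm t ω ≠ 0 ∧ Ncnt false false dm t ω ≠ 0) ∧ prc D1 Dm g false false dm t ω) from fun hp => hcond hp.1)]
      ring
  have hAminus : ∀ t dm ω,
      Ncnt false true dm t ω / NS ω * DIDm dm t ω
        = ∑ g, (c11 D1 Dm N NS Ncnt g t dm ω *
              (po g t true dm ω - po g (t - 1) true dm ω)
            - cOut D1 Dm N NS Ncnt g t dm ω *
              ((po g t true dm ω - po g (t - 1) true dm ω)
                - (po g t true dm ω - po g t false dm ω))) := by
    intro t dm ω
    rw [hDIDm]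
    split_ifs with hcond
    · obtain ⟨h11, h01⟩ := hcond
      rw [mul_sub, Finset.mul_sum, Finset.mul_sum, ← Finset.sum_sub_distrib]
      refine Finset.sum_congr rfl fun g _ => ?_
      simp only [c11, cOut]
      by_cases h1g : prc D1 Dm g true true dm t ω
      · obtain ⟨e1, e2, e3, e4⟩ := h1g
        have hog : ¬ prc D1 Dm g false true dm t ω := fun hp =>
          Bool.noConfusion (e1.symm.trans hp.1)
        rw [if_pos (show D1 g t ω = true ∧ D1 g (t - 1) ω = true ∧ Dm g t ω = dm ∧
              Dm g (t - 1) ω = dm from ⟨e1, e2, e3, e4⟩),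
          if_neg (show ¬(D1 g t ω = false ∧ D1 g (t - 1) ω = true ∧ Dm g t ω = dm ∧ Dm g (t - 1) ω = dm) from fun hp => hog hp),
          if_pos (show (Ncnt true true dm t ω ≠ 0 ∧ Ncnt false true dm t ω ≠ 0) ∧ prc D1 Dm g true true dm t ω from ⟨⟨h11, h01⟩, ⟨e1, e2, e3, e4⟩⟩),
          if_neg (show ¬(prc D1 Dm g false true dm t ω ∧ Ncnt true true dm t ω ≠ 0) from fun hp => hog hp.1),
          hY g t ω, hY g (t - 1) ω, e1, e2, e3, e4]
        ring
      · by_cases hog : prc D1 Dm g false true dm t ω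
        · obtain ⟨e1, e2, e3, e4⟩ := hog
          rw [if_neg (show ¬(D1 g t ω = true ∧ D1 g (t - 1) ω = true ∧ Dm g t ω = dm ∧ Dm g (t - 1) ω = dm) from fun hp => h1g hp),
            if_pos (show D1 g t ω = false ∧ D1 g (t - 1) ω = true ∧ Dm g t ω = dm ∧ Dm g (t - 1) ω = dm from ⟨e1, e2, e3, e4⟩),
            if_neg (show ¬((Ncnt true true dm t ω ≠ 0 ∧ Ncnt false true dm t ω ≠ 0) ∧ prc D1 Dm g true true dm t ω) from fun hp => h1g hp.2),
            if_pos (show prc D1 Dm g false true dm t ω ∧ Ncnt true true dm t ω ≠ 0 from ⟨⟨e1, e2, e3, e4⟩, h11⟩),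
            hY g t ω, hY g (t - 1) ω, e1, e2, e3, e4, didm_div_aux h01]
          ring
        · rw [if_neg (show ¬(D1 g t ω = true ∧ D1 g (t - 1) ω = true ∧ Dm g t ω = dm ∧ Dm g (t - 1) ω = dm) from fun hp => h1g hp),
            if_neg (show ¬(D1 g t ω = false ∧ D1 g (t - 1) ω = true ∧ Dm g t ω = dm ∧ Dm g (t - 1) ω = dm) from fun hp => hog hp),
            if_neg (show ¬((Ncnt true true dm t ω ≠ 0 ∧ Ncnt false true dm t ω ≠ 0) ∧ prc D1 Dm g true true dm t ω) from fun hp => h1g hp.2),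
            if_neg (show ¬(prc D1 Dm g false true dm t ω ∧ Ncnt true true dm t ω ≠ 0) from fun hp => hog hp.1)]
          ring
    · rw [mul_zero]
      symm
      refine Finset.sum_eq_zero fun g _ => ?_
      simp only [c11, cOut]
      rw [if_neg (show ¬((Ncnt true true dm t ω ≠ 0 ∧ Ncnt false true dm t ω ≠ 0) ∧ prc D1 Dm g true true dm t ω) from fun hp => hcond hp.1),
        if_neg (show ¬(prc D1 Dm g false true dm t ω ∧ Ncnt true true dm t ω ≠ 0) from
          fun hp => hcond ⟨hp.2, (hNcnt_ne false true dm t ω).mpr ⟨g, hp.1⟩⟩)]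
      ring
  -- ## the τ-part sums to the δ^𝒮 integrand
  have hBsingle : ∀ ω t g, 2 ≤ t → t ≤ T →
      (∑ dm : Fin Km1 → Bool,
          (cIn D1 Dm N NS Ncnt g t dm ω + cOut D1 Dm N NS Ncnt g t dm ω)
            * (po g t true dm ω - po g t false dm ω))
        = (if (g, t) ∈ S ω then N g t / NS ω *
            (po g t true (Dm g t ω) ω - po g t false (Dm g t ω) ω) else 0) := by
    intro ω t g h2 hTT
    by_cases hgt : (g, t) ∈ S ω
    · obtain ⟨-, -, hne, hdm, g', k1, k2, k3, k4⟩ := (hS ω g t).mp hgt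
      rw [if_pos hgt]
      refine (Finset.sum_eq_single_of_mem (Dm g t ω) (Finset.mem_univ _)
        fun dm _ hdm' => ?_).trans ?_
      · simp only [cIn, cOut]
        rw [if_neg (show ¬(prc D1 Dm g true false dm t ω ∧ Ncnt false false dm t ω ≠ 0) from fun hp => hdm' hp.1.2.2.1.symm),
          if_neg (show ¬(prc D1 Dm g false true dm t ω ∧ Ncnt true true dm t ω ≠ 0) from fun hp => hdm' hp.1.2.2.1.symm)]
        ring
      · simp only [cIn, cOut]
        rcases Bool.eq_false_or_eq_true (D1 g t ω) with hd | hd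
        · have hd' : D1 g (t - 1) ω = false := by
            rcases Bool.eq_false_or_eq_true (D1 g (t - 1) ω) with h' | h'
            · exact absurd (hd.trans h'.symm) hne
            · exact h'
          have h00 : Ncnt false false (Dm g t ω) t ω ≠ 0 := (hNcnt_ne _ _ _ _ _).mpr
            ⟨g', k2.trans hd', k1.symm.trans (k2.trans hd'), k4.trans hdm.symm,
              k3.symm.trans (k4.trans hdm.symm)⟩
          rw [if_pos (show prc D1 Dm g true false (Dm g t ω) t ω ∧
              Ncnt false false (Dm g t ω) t ω ≠ 0 from ⟨⟨hd, hd', rfl, hdm.symm⟩, h00⟩),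
            if_neg (show ¬(prc D1 Dm g false true (Dm g t ω) t ω ∧
              Ncnt true true (Dm g t ω) t ω ≠ 0) from
              fun hp => Bool.noConfusion (hd.symm.trans hp.1.1))]
          ring
        · have hd' : D1 g (t - 1) ω = true := by
            rcases Bool.eq_false_or_eq_true (D1 g (t - 1) ω) with h' | h'
            · exact h'
            · exact absurd (hd.trans h'.symm) hne
          have h11 : Ncnt true true (Dm g t ω) t ω ≠ 0 := (hNcnt_ne _ _ _ _ _).mpr
            ⟨g', k2.trans hd', k1.symm.trans (k2.trans hd'), k4.trans hdm.symm,
              k3.symm.trans (k4.trans hdm.symm)⟩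
          rw [if_neg (show ¬(prc D1 Dm g true false (Dm g t ω) t ω ∧
              Ncnt false false (Dm g t ω) t ω ≠ 0) from
              fun hp => Bool.noConfusion (hd.symm.trans hp.1.1)),
            if_pos (show prc D1 Dm g false true (Dm g t ω) t ω ∧
              Ncnt true true (Dm g t ω) t ω ≠ 0 from ⟨⟨hd, hd', rfl, hdm.symm⟩, h11⟩)]
          ring
    · rw [if_neg hgt]
      refine Finset.sum_eq_zero fun dm _ => ?_
      simp only [cIn, cOut]
      have hnin : ¬(prc D1 Dm g true false dm t ω ∧ Ncnt false false dm t ω ≠ 0) := by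
        rintro ⟨⟨e1, e2, e3, e4⟩, hcc⟩
        obtain ⟨g', j1, j2, j3, j4⟩ := (hNcnt_ne _ _ _ _ _).mp hcc
        exact hgt ((hS ω g t).mpr ⟨h2, hTT, by simp [e1, e2], e3.trans e4.symm, g',
          j1.trans j2.symm, j1.trans e2.symm, j3.trans j4.symm, j3.trans e4.symm⟩)
      have hnout : ¬(prc D1 Dm g false true dm t ω ∧ Ncnt true true dm t ω ≠ 0) := by
        rintro ⟨⟨e1, e2, e3, e4⟩, hcc⟩
        obtain ⟨g', j1, j2, j3, j4⟩ := (hNcnt_ne _ _ _ _ _).mp hcc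
        exact hgt ((hS ω g t).mpr ⟨h2, hTT, by simp [e1, e2], e3.trans e4.symm, g',
          j1.trans j2.symm, j1.trans e2.symm, j3.trans j4.symm, j3.trans e4.symm⟩)
      rw [if_neg hnin, if_neg hnout]
      ring
  have hδ_pt : ∀ ω, (if NS ω ≠ 0 then
        (1 / NS ω) * ∑ p ∈ S ω, N p.1 p.2 *
          (po p.1 p.2 true (Dm p.1 p.2 ω) ω - po p.1 p.2 false (Dm p.1 p.2 ω) ω)
        else 0)
      = ∑ t ∈ Finset.Icc 2 T, ∑ dm : Fin Km1 → Bool, ∑ g,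
          (cIn D1 Dm N NS Ncnt g t dm ω + cOut D1 Dm N NS Ncnt g t dm ω)
            * (po g t true dm ω - po g t false dm ω) := by
    intro ω
    have h1 : ∀ t ∈ Finset.Icc 2 T,
        (∑ dm : Fin Km1 → Bool, ∑ g,
          (cIn D1 Dm N NS Ncnt g t dm ω + cOut D1 Dm N NS Ncnt g t dm ω)
            * (po g t true dm ω - po g t false dm ω))
        = ∑ g, (if (g, t) ∈ S ω then N g t / NS ω *
            (po g t true (Dm g t ω) ω - po g t false (Dm g t ω) ω) else 0) := by
      intro t ht
      rw [Finset.sum_comm]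
      exact Finset.sum_congr rfl fun g _ =>
        hBsingle ω t g (Finset.mem_Icc.mp ht).1 (Finset.mem_Icc.mp ht).2
    rw [Finset.sum_congr rfl h1]
    have h3 : ∑ p ∈ Finset.univ ×ˢ Finset.Icc 2 T,
        (if p ∈ S ω then N p.1 p.2 / NS ω *
          (po p.1 p.2 true (Dm p.1 p.2 ω) ω - po p.1 p.2 false (Dm p.1 p.2 ω) ω) else 0)
        = ∑ g, ∑ t ∈ Finset.Icc 2 T, (if (g, t) ∈ S ω then N g t / NS ω *
            (po g t true (Dm g t ω) ω - po g t false (Dm g t ω) ω) else 0) :=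
      Finset.sum_product _ _ _
    rw [show (∑ t ∈ Finset.Icc 2 T, ∑ g, (if (g, t) ∈ S ω then N g t / NS ω *
          (po g t true (Dm g t ω) ω - po g t false (Dm g t ω) ω) else 0))
        = ∑ g, ∑ t ∈ Finset.Icc 2 T, (if (g, t) ∈ S ω then N g t / NS ω *
          (po g t true (Dm g t ω) ω - po g t false (Dm g t ω) ω) else 0) from
        Finset.sum_comm,
      ← h3, Finset.sum_ite_mem, Finset.inter_eq_right.mpr (hS_sub ω)]
    split_ifs with h
    · rw [Finset.mul_sum]
      exact Finset.sum_congr rfl fun p _ => by ring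
    · push_neg at h
      rw [hS_empty ω h]
      simp
  -- ## cancellation of the trend terms
  have hC1 : ∀ ω t dm, (∑ g, cIn D1 Dm N NS Ncnt g t dm ω)
      = ∑ g, c00 D1 Dm N NS Ncnt g t dm ω := by
    intro ω t dm
    by_cases h00 : Ncnt false false dm t ω = 0
    · rw [Finset.sum_eq_zero fun g _ => by
          simp only [cIn]; rw [if_neg (show ¬(prc D1 Dm g true false dm t ω ∧ Ncnt false false dm t ω ≠ 0) from fun hp => hp.2 h00)],
        Finset.sum_eq_zero fun g _ => by
          simp only [c00]; rw [if_neg (show ¬((Ncnt true false dm t ω ≠ 0 ∧ Ncnt false false dm t ω ≠ 0) ∧ prc D1 Dm g false false dm t ω) from fun hp => hp.1.2 h00)]]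
    · have e1 : (∑ g, cIn D1 Dm N NS Ncnt g t dm ω) = Ncnt true false dm t ω / NS ω := by
        rw [hNcnt' true false dm t ω, Finset.sum_div]
        refine Finset.sum_congr rfl fun g _ => ?_
        simp only [cIn]
        by_cases hp : prc D1 Dm g true false dm t ω
        · rw [if_pos (show prc D1 Dm g true false dm t ω ∧ Ncnt false false dm t ω ≠ 0 from ⟨hp, h00⟩), if_pos hp]
        · rw [if_neg (show ¬(prc D1 Dm g true false dm t ω ∧ Ncnt false false dm t ω ≠ 0) from fun hq => hp hq.1), if_neg hp, zero_div]
      have e2 : (∑ g, c00 D1 Dm N NS Ncnt g t dm ω) = Ncnt true false dm t ω / NS ω := by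
        by_cases h10 : Ncnt true false dm t ω = 0
        · rw [h10, zero_div]
          exact Finset.sum_eq_zero fun g _ => by
            simp only [c00]; rw [if_neg (show ¬((Ncnt true false dm t ω ≠ 0 ∧ Ncnt false false dm t ω ≠ 0) ∧ prc D1 Dm g false false dm t ω) from fun hp => hp.1.1 h10)]
        · have e3 : (∑ g, c00 D1 Dm N NS Ncnt g t dm ω)
              = Ncnt true false dm t ω / NS ω *
                ((∑ g, if prc D1 Dm g false false dm t ω then N g t else 0)
                  / Ncnt false false dm t ω) := by
            rw [Finset.sum_div, Finset.mul_sum]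
            refine Finset.sum_congr rfl fun g _ => ?_
            simp only [c00]
            by_cases hp : prc D1 Dm g false false dm t ω
            · rw [if_pos (show (Ncnt true false dm t ω ≠ 0 ∧ Ncnt false false dm t ω ≠ 0) ∧ prc D1 Dm g false false dm t ω from ⟨⟨h10, h00⟩, hp⟩), if_pos hp]
            · rw [if_neg (show ¬((Ncnt true false dm t ω ≠ 0 ∧ Ncnt false false dm t ω ≠ 0) ∧ prc D1 Dm g false false dm t ω) from fun hq => hp hq.2), if_neg hp, zero_div,
                mul_zero]
          rw [e3, ← hNcnt' false false dm t ω, div_self h00, mul_one]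
      rw [e1, e2]
  have hC2 : ∀ ω t dm, (∑ g, c11 D1 Dm N NS Ncnt g t dm ω)
      = ∑ g, cOut D1 Dm N NS Ncnt g t dm ω := by
    intro ω t dm
    by_cases h11 : Ncnt true true dm t ω = 0
    · rw [Finset.sum_eq_zero fun g _ => by
          simp only [c11]; rw [if_neg (show ¬((Ncnt true true dm t ω ≠ 0 ∧ Ncnt false true dm t ω ≠ 0) ∧ prc D1 Dm g true true dm t ω) from fun hp => hp.1.1 h11)],
        Finset.sum_eq_zero fun g _ => by
          simp only [cOut]; rw [if_neg (show ¬(prc D1 Dm g false true dm t ω ∧ Ncnt true true dm t ω ≠ 0) from fun hp => hp.2 h11)]]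
    · have e1 : (∑ g, cOut D1 Dm N NS Ncnt g t dm ω) = Ncnt false true dm t ω / NS ω := by
        rw [hNcnt' false true dm t ω, Finset.sum_div]
        refine Finset.sum_congr rfl fun g _ => ?_
        simp only [cOut]
        by_cases hp : prc D1 Dm g false true dm t ω
        · rw [if_pos (show prc D1 Dm g false true dm t ω ∧ Ncnt true true dm t ω ≠ 0 from ⟨hp, h11⟩), if_pos hp]
        · rw [if_neg (show ¬(prc D1 Dm g false true dm t ω ∧ Ncnt true true dm t ω ≠ 0) from fun hq => hp hq.1), if_neg hp, zero_div]
      have e2 : (∑ g, c11 D1 Dm N NS Ncnt g t dm ω) = Ncnt false true dm t ω / NS ω := by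
        by_cases h01 : Ncnt false true dm t ω = 0
        · rw [h01, zero_div]
          exact Finset.sum_eq_zero fun g _ => by
            simp only [c11]; rw [if_neg (show ¬((Ncnt true true dm t ω ≠ 0 ∧ Ncnt false true dm t ω ≠ 0) ∧ prc D1 Dm g true true dm t ω) from fun hp => hp.1.2 h01)]
        · have e3 : (∑ g, c11 D1 Dm N NS Ncnt g t dm ω)
              = Ncnt false true dm t ω / NS ω *
                ((∑ g, if prc D1 Dm g true true dm t ω then N g t else 0)
                  / Ncnt true true dm t ω) := by
            rw [Finset.sum_div, Finset.mul_sum]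
            refine Finset.sum_congr rfl fun g _ => ?_
            simp only [c11]
            by_cases hp : prc D1 Dm g true true dm t ω
            · rw [if_pos (show (Ncnt true true dm t ω ≠ 0 ∧ Ncnt false true dm t ω ≠ 0) ∧ prc D1 Dm g true true dm t ω from ⟨⟨h11, h01⟩, hp⟩), if_pos hp]
            · rw [if_neg (show ¬((Ncnt true true dm t ω ≠ 0 ∧ Ncnt false true dm t ω ≠ 0) ∧ prc D1 Dm g true true dm t ω) from fun hq => hp hq.2), if_neg hp, zero_div,
                mul_zero]
          rw [e3, ← hNcnt' true true dm t ω, div_self h11, mul_one]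
      rw [e2, e1]
  -- ## the pointwise identity
  have hDIDM_sum : ∀ ω, DIDM ω = ∑ t ∈ Finset.Icc 2 T, ∑ dm : Fin Km1 → Bool,
      (Ncnt true false dm t ω / NS ω * DIDp dm t ω
        + Ncnt false true dm t ω / NS ω * DIDm dm t ω) := by
    intro ω; rw [hDIDM]
    split_ifs with h
    · rfl
    · push_neg at h
      symm
      refine Finset.sum_eq_zero fun t _ => Finset.sum_eq_zero fun dm _ => ?_
      rw [h, div_zero, div_zero, zero_mul, zero_mul, add_zero]
  have hptw : ∀ ω, DIDM ω = (if NS ω ≠ 0 then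
        (1 / NS ω) * ∑ p ∈ S ω, N p.1 p.2 *
          (po p.1 p.2 true (Dm p.1 p.2 ω) ω - po p.1 p.2 false (Dm p.1 p.2 ω) ω)
        else 0)
      + ∑ t ∈ Finset.Icc 2 T, ∑ dm : Fin Km1 → Bool, ∑ g,
          (cIn D1 Dm N NS Ncnt g t dm ω *
              (po g t false dm ω - po g (t - 1) false dm ω)
            - c00 D1 Dm N NS Ncnt g t dm ω *
              (po g t false dm ω - po g (t - 1) false dm ω)
            + (c11 D1 Dm N NS Ncnt g t dm ω *
                (po g t true dm ω - po g (t - 1) true dm ω)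
              - cOut D1 Dm N NS Ncnt g t dm ω *
                (po g t true dm ω - po g (t - 1) true dm ω))) := by
    intro ω
    rw [hDIDM_sum ω, hδ_pt ω, ← Finset.sum_add_distrib]
    refine Finset.sum_congr rfl fun t ht => ?_
    rw [← Finset.sum_add_distrib]
    refine Finset.sum_congr rfl fun dm _ => ?_
    rw [hAplus t dm ω, hAminus t dm ω, ← Finset.sum_add_distrib, ← Finset.sum_add_distrib]
    exact Finset.sum_congr rfl fun g _ => by ring
  -- ## the dependence-on-treatments lemmas
  have hdepD : ∀ ω ω', (∀ (g : Fin G) (s : Fin (T+1)),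
        D1 g s ω = D1 g s ω' ∧ Dm g s ω = Dm g s ω') →
      ∀ (g : Fin G) (s : ℕ), s ≤ T → D1 g s ω = D1 g s ω' ∧ Dm g s ω = Dm g s ω' := by
    intro ω ω' h g s hs
    exact h g ⟨s, by omega⟩
  have hprc_dep : ∀ ω ω', (∀ (g : Fin G) (s : Fin (T+1)),
        D1 g s ω = D1 g s ω' ∧ Dm g s ω = Dm g s ω') →
      ∀ g d d' dm t, 2 ≤ t → t ≤ T →
        (prc D1 Dm g d d' dm t ω ↔ prc D1 Dm g d d' dm t ω') := by
    intro ω ω' h g d d' dm t h2 hTT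
    have e1 := hdepD ω ω' h g t hTT
    have e2 := hdepD ω ω' h g (t - 1) (by omega)
    unfold prc
    rw [e1.1, e1.2, e2.1, e2.2]
  have hNcnt_dep : ∀ ω ω', (∀ (g : Fin G) (s : Fin (T+1)),
        D1 g s ω = D1 g s ω' ∧ Dm g s ω = Dm g s ω') →
      ∀ d d' dm t, 2 ≤ t → t ≤ T → Ncnt d d' dm t ω = Ncnt d d' dm t ω' := by
    intro ω ω' h d d' dm t h2 hTT
    rw [hNcnt', hNcnt']
    exact Finset.sum_congr rfl fun g _ =>
      if_congr (hprc_dep ω ω' h g d d' dm t h2 hTT) rfl rfl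
  have hS_dep : ∀ ω ω', (∀ (g : Fin G) (s : Fin (T+1)),
        D1 g s ω = D1 g s ω' ∧ Dm g s ω = Dm g s ω') → S ω = S ω' := by
    have dir : ∀ ω ω', (∀ (g : Fin G) (s : Fin (T+1)),
        D1 g s ω = D1 g s ω' ∧ Dm g s ω = Dm g s ω') → S ω ⊆ S ω' := by
      rintro ω ω' h ⟨g, t⟩ hp
      obtain ⟨h2, hTT, hne, hdm, g', k1, k2, k3, k4⟩ := (hS ω g t).mp hp
      have et := hdepD ω ω' h g t hTT
      have et1 := hdepD ω ω' h g (t - 1) (by omega)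
      have et' := hdepD ω ω' h g' t hTT
      have et1' := hdepD ω ω' h g' (t - 1) (by omega)
      refine (hS ω' g t).mpr ⟨h2, hTT, ?_, ?_, g', ?_, ?_, ?_, ?_⟩
      · rw [← et.1, ← et1.1]; exact hne
      · rw [← et.2, ← et1.2]; exact hdm
      · rw [← et'.1, ← et1'.1]; exact k1
      · rw [← et'.1, ← et1.1]; exact k2
      · rw [← et'.2, ← et1'.2]; exact k3
      · rw [← et'.2, ← et1.2]; exact k4
    intro ω ω' h
    exact Finset.Subset.antisymm (dir ω ω' h)
      (dir ω' ω fun g s => ⟨(h g s).1.symm, (h g s).2.symm⟩)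
  have hNS_dep : ∀ ω ω', (∀ (g : Fin G) (s : Fin (T+1)),
        D1 g s ω = D1 g s ω' ∧ Dm g s ω = Dm g s ω') → NS ω = NS ω' := by
    intro ω ω' h
    rw [hNS, hNS, hS_dep ω ω' h]
  -- ## the key integral computation, applied to the four coefficient functions
  have KEY : ∀ (r : Ω → ℝ), (∀ ω ω', (∀ (g : Fin G) (s : Fin (T+1)),
        D1 g s ω = D1 g s ω' ∧ Dm g s ω = Dm g s ω') → r ω = r ω') →
      Integrable r μ ∧
      ∀ g t d dm, 2 ≤ t → t ≤ T →
        Integrable (fun ω => r ω * (po g t d dm ω - po g (t - 1) d dm ω)) μ ∧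
        ∫ ω, r ω * (po g t d dm ω - po g (t - 1) d dm ω) ∂μ
          = (∫ ω, r ω ∂μ) * ψ d dm t := by
    intro r hr
    obtain ⟨h1, h2⟩ := @didm_key G T Km1 Ω mD inst μ inferInstance D1 Dm
      hD1meas hDmmeas hmD r hr
    refine ⟨h1, fun g t d dm ht hT' => ?_⟩
    obtain ⟨h3, h4⟩ := h2 _ ((hpoint g t d dm).sub (hpoint g (t - 1) d dm))
    exact ⟨h3, h4 _ (hψ d dm t ht hT' g)⟩
  have KIn : ∀ g t dm, 2 ≤ t → t ≤ T →
      Integrable (fun ω => cIn D1 Dm N NS Ncnt g t dm ω) μ ∧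
      ∀ g' t' d dm', 2 ≤ t' → t' ≤ T →
        Integrable (fun ω => cIn D1 Dm N NS Ncnt g t dm ω *
          (po g' t' d dm' ω - po g' (t' - 1) d dm' ω)) μ ∧
        ∫ ω, cIn D1 Dm N NS Ncnt g t dm ω * (po g' t' d dm' ω - po g' (t' - 1) d dm' ω) ∂μ
          = (∫ ω, cIn D1 Dm N NS Ncnt g t dm ω ∂μ) * ψ d dm' t' := by
    intro g t dm h2 hTT
    exact KEY _ (by
      intro ω ω' h
      simp only [cIn]
      rw [if_congr (and_congr (hprc_dep ω ω' h g true false dm t h2 hTT)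
        (by rw [hNcnt_dep ω ω' h false false dm t h2 hTT]))
        (by rw [hNS_dep ω ω' h]) rfl])
  have K00 : ∀ g t dm, 2 ≤ t → t ≤ T →
      Integrable (fun ω => c00 D1 Dm N NS Ncnt g t dm ω) μ ∧
      ∀ g' t' d dm', 2 ≤ t' → t' ≤ T →
        Integrable (fun ω => c00 D1 Dm N NS Ncnt g t dm ω *
          (po g' t' d dm' ω - po g' (t' - 1) d dm' ω)) μ ∧
        ∫ ω, c00 D1 Dm N NS Ncnt g t dm ω * (po g' t' d dm' ω - po g' (t' - 1) d dm' ω) ∂μ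
          = (∫ ω, c00 D1 Dm N NS Ncnt g t dm ω ∂μ) * ψ d dm' t' := by
    intro g t dm h2 hTT
    exact KEY _ (by
      intro ω ω' h
      simp only [c00]
      rw [if_congr (and_congr (and_congr
          (by rw [hNcnt_dep ω ω' h true false dm t h2 hTT])
          (by rw [hNcnt_dep ω ω' h false false dm t h2 hTT]))
          (hprc_dep ω ω' h g false false dm t h2 hTT))
        (by rw [hNcnt_dep ω ω' h true false dm t h2 hTT,
          hNcnt_dep ω ω' h false false dm t h2 hTT, hNS_dep ω ω' h]) rfl])
  have K11 : ∀ g t dm, 2 ≤ t → t ≤ T →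
      Integrable (fun ω => c11 D1 Dm N NS Ncnt g t dm ω) μ ∧
      ∀ g' t' d dm', 2 ≤ t' → t' ≤ T →
        Integrable (fun ω => c11 D1 Dm N NS Ncnt g t dm ω *
          (po g' t' d dm' ω - po g' (t' - 1) d dm' ω)) μ ∧
        ∫ ω, c11 D1 Dm N NS Ncnt g t dm ω * (po g' t' d dm' ω - po g' (t' - 1) d dm' ω) ∂μ
          = (∫ ω, c11 D1 Dm N NS Ncnt g t dm ω ∂μ) * ψ d dm' t' := by
    intro g t dm h2 hTT
    exact KEY _ (by
      intro ω ω' h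
      simp only [c11]
      rw [if_congr (and_congr (and_congr
          (by rw [hNcnt_dep ω ω' h true true dm t h2 hTT])
          (by rw [hNcnt_dep ω ω' h false true dm t h2 hTT]))
          (hprc_dep ω ω' h g true true dm t h2 hTT))
        (by rw [hNcnt_dep ω ω' h true true dm t h2 hTT,
          hNcnt_dep ω ω' h false true dm t h2 hTT, hNS_dep ω ω' h]) rfl])
  have KOut : ∀ g t dm, 2 ≤ t → t ≤ T →
      Integrable (fun ω => cOut D1 Dm N NS Ncnt g t dm ω) μ ∧
      ∀ g' t' d dm', 2 ≤ t' → t' ≤ T →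
        Integrable (fun ω => cOut D1 Dm N NS Ncnt g t dm ω *
          (po g' t' d dm' ω - po g' (t' - 1) d dm' ω)) μ ∧
        ∫ ω, cOut D1 Dm N NS Ncnt g t dm ω * (po g' t' d dm' ω - po g' (t' - 1) d dm' ω) ∂μ
          = (∫ ω, cOut D1 Dm N NS Ncnt g t dm ω ∂μ) * ψ d dm' t' := by
    intro g t dm h2 hTT
    exact KEY _ (by
      intro ω ω' h
      simp only [cOut]
      rw [if_congr (and_congr (hprc_dep ω ω' h g false true dm t h2 hTT)
        (by rw [hNcnt_dep ω ω' h true true dm t h2 hTT]))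
        (by rw [hNS_dep ω ω' h]) rfl])
  -- ## integrability of the error term
  have hEint : ∀ t ∈ Finset.Icc 2 T, ∀ (dm : Fin Km1 → Bool) (g : Fin G),
      Integrable (fun ω =>
        cIn D1 Dm N NS Ncnt g t dm ω * (po g t false dm ω - po g (t - 1) false dm ω)
        - c00 D1 Dm N NS Ncnt g t dm ω * (po g t false dm ω - po g (t - 1) false dm ω)
        + (c11 D1 Dm N NS Ncnt g t dm ω * (po g t true dm ω - po g (t - 1) true dm ω)
          - cOut D1 Dm N NS Ncnt g t dm ω * (po g t true dm ω - po g (t - 1) true dm ω))) μ := by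
    intro t ht dm g
    obtain ⟨h2, hTT⟩ := Finset.mem_Icc.mp ht
    exact (((KIn g t dm h2 hTT).2 g t false dm h2 hTT).1.sub
        ((K00 g t dm h2 hTT).2 g t false dm h2 hTT).1).add
      ((((K11 g t dm h2 hTT).2 g t true dm h2 hTT).1).sub
        (((KOut g t dm h2 hTT).2 g t true dm h2 hTT).1))
  -- ## the error term integrates to zero
  have hErr0 : ∫ ω, (∑ t ∈ Finset.Icc 2 T, ∑ dm : Fin Km1 → Bool, ∑ g,
      (cIn D1 Dm N NS Ncnt g t dm ω * (po g t false dm ω - po g (t - 1) false dm ω)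
        - c00 D1 Dm N NS Ncnt g t dm ω * (po g t false dm ω - po g (t - 1) false dm ω)
        + (c11 D1 Dm N NS Ncnt g t dm ω * (po g t true dm ω - po g (t - 1) true dm ω)
          - cOut D1 Dm N NS Ncnt g t dm ω * (po g t true dm ω - po g (t - 1) true dm ω)))) ∂μ
      = 0 := by
    rw [integral_finset_sum _ (fun t ht => integrable_finset_sum _ fun dm _ =>
      integrable_finset_sum _ fun g _ => hEint t ht dm g)]
    refine Finset.sum_eq_zero fun t ht => ?_
    obtain ⟨h2, hTT⟩ := Finset.mem_Icc.mp ht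
    rw [integral_finset_sum _ (fun dm _ =>
      integrable_finset_sum _ fun g _ => hEint t ht dm g)]
    refine Finset.sum_eq_zero fun dm _ => ?_
    rw [integral_finset_sum _ (fun g _ => hEint t ht dm g)]
    have hint4 : ∀ g : Fin G,
        ∫ ω, (cIn D1 Dm N NS Ncnt g t dm ω * (po g t false dm ω - po g (t - 1) false dm ω)
          - c00 D1 Dm N NS Ncnt g t dm ω * (po g t false dm ω - po g (t - 1) false dm ω)
          + (c11 D1 Dm N NS Ncnt g t dm ω * (po g t true dm ω - po g (t - 1) true dm ω)
            - cOut D1 Dm N NS Ncnt g t dm ω * (po g t true dm ω - po g (t - 1) true dm ω))) ∂μ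
        = (∫ ω, cIn D1 Dm N NS Ncnt g t dm ω ∂μ) * ψ false dm t
          - (∫ ω, c00 D1 Dm N NS Ncnt g t dm ω ∂μ) * ψ false dm t
          + ((∫ ω, c11 D1 Dm N NS Ncnt g t dm ω ∂μ) * ψ true dm t
            - (∫ ω, cOut D1 Dm N NS Ncnt g t dm ω ∂μ) * ψ true dm t) := by
      intro g
      obtain ⟨pIn, eIn⟩ := (KIn g t dm h2 hTT).2 g t false dm h2 hTT
      obtain ⟨p00, e00⟩ := (K00 g t dm h2 hTT).2 g t false dm h2 hTT
      obtain ⟨p11, e11⟩ := (K11 g t dm h2 hTT).2 g t true dm h2 hTT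
      obtain ⟨pOut, eOut⟩ := (KOut g t dm h2 hTT).2 g t true dm h2 hTT
      have pA : Integrable (fun ω =>
          cIn D1 Dm N NS Ncnt g t dm ω * (po g t false dm ω - po g (t - 1) false dm ω)
          - c00 D1 Dm N NS Ncnt g t dm ω * (po g t false dm ω - po g (t - 1) false dm ω)) μ :=
        pIn.sub p00
      have pB : Integrable (fun ω =>
          c11 D1 Dm N NS Ncnt g t dm ω * (po g t true dm ω - po g (t - 1) true dm ω)
          - cOut D1 Dm N NS Ncnt g t dm ω * (po g t true dm ω - po g (t - 1) true dm ω)) μ :=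
        p11.sub pOut
      rw [integral_add pA pB, integral_sub pIn p00, integral_sub p11 pOut,
        eIn, e00, e11, eOut]
    rw [Finset.sum_congr rfl fun g _ => hint4 g, Finset.sum_add_distrib,
      Finset.sum_sub_distrib, Finset.sum_sub_distrib,
      ← Finset.sum_mul, ← Finset.sum_mul, ← Finset.sum_mul, ← Finset.sum_mul]
    have q1 : (∑ g, ∫ ω, cIn D1 Dm N NS Ncnt g t dm ω ∂μ)
        = ∑ g, ∫ ω, c00 D1 Dm N NS Ncnt g t dm ω ∂μ := by
      rw [← integral_finset_sum _ (fun g _ => (KIn g t dm h2 hTT).1),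
        ← integral_finset_sum _ (fun g _ => (K00 g t dm h2 hTT).1)]
      exact integral_congr_ae (Filter.Eventually.of_forall fun ω => hC1 ω t dm)
    have q2 : (∑ g, ∫ ω, c11 D1 Dm N NS Ncnt g t dm ω ∂μ)
        = ∑ g, ∫ ω, cOut D1 Dm N NS Ncnt g t dm ω ∂μ := by
      rw [← integral_finset_sum _ (fun g _ => (K11 g t dm h2 hTT).1),
        ← integral_finset_sum _ (fun g _ => (KOut g t dm h2 hTT).1)]
      exact integral_congr_ae (Filter.Eventually.of_forall fun ω => hC2 ω t dm)
    rw [q1, q2]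
    ring
  -- ## conclusion
  calc ∫ ω, DIDM ω ∂μ
      = ∫ ω, ((if NS ω ≠ 0 then
          (1 / NS ω) * ∑ p ∈ S ω, N p.1 p.2 *
            (po p.1 p.2 true (Dm p.1 p.2 ω) ω - po p.1 p.2 false (Dm p.1 p.2 ω) ω)
          else 0)
        + ∑ t ∈ Finset.Icc 2 T, ∑ dm : Fin Km1 → Bool, ∑ g,
            (cIn D1 Dm N NS Ncnt g t dm ω * (po g t false dm ω - po g (t - 1) false dm ω)
              - c00 D1 Dm N NS Ncnt g t dm ω * (po g t false dm ω - po g (t - 1) false dm ω)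
              + (c11 D1 Dm N NS Ncnt g t dm ω * (po g t true dm ω - po g (t - 1) true dm ω)
                - cOut D1 Dm N NS Ncnt g t dm ω * (po g t true dm ω - po g (t - 1) true dm ω)))) ∂μ :=
        integral_congr_ae (Filter.Eventually.of_forall hptw)
    _ = δS := by
        rw [integral_add hδSint (integrable_finset_sum _ fun t ht =>
          integrable_finset_sum _ fun dm _ => integrable_finset_sum _ fun g _ => hEint t ht dm g),
          hErr0, add_zero, hδS]
end

section
/- In the proof of the DID_M unbiasedness result: let t ≥ 2, 𝐝_{−1} ∈ {0,1}^{K−1} with N_{1,0,𝐝_{−1},t} > 0 and N_{0,0,𝐝_{−1},t} > 0, and suppose E[Y_{g,t}(0,𝐝_{−1}) − Y_{g,t−1}(0,𝐝_{−1})|𝐃] = ψ_{0,𝐝_{−1},t} (the same number for all g). Then N_{1,0,𝐝_{−1},t}·E[DID_{+,𝐝_{−1},t}|𝐃] = Σ_{g: D^1_{g,t}=1, D^1_{g,t−1}=0, D^{-1}_{g,t}=D^{-1}_{g,t−1}=𝐝_{−1}} N_{g,t}·E[Y_{g,t}(1,𝐝_{−1}) − Y_{g,t}(0,𝐝_{−1})|𝐃].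 -/
open Finset MeasureTheory

/-- Key step in the proof of the unbiasedness of `DID_M`.
In a sharp design with `K` binary treatments (first treatment `D¹`, other
treatments `Dm` with values in `{0,1}^{K−1}`), fix `t ≥ 2` and a value `dm` of
the other treatments with positive weights `N_{1,0,dm,t}` and `N_{0,0,dm,t}` of
switchers-in and stable-untreated cells. If the never-switching potential
outcome trend `E[Y_{g,t}(0,dm) − Y_{g,t−1}(0,dm)]` equals the same number `ψ`
for all `g`, then `N_{1,0,dm,t}·E[DID₊]` equals the weighted sum over
switchers-in of the average effect of moving the first treatment from 0 to 1. -/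
theorem DID_plus_identifies_switchers_effect
    (G T Km1 : ℕ) {Ω : Type*} [MeasurableSpace Ω]
    (μ : Measure Ω) [IsProbabilityMeasure μ]
    (po : Fin G → ℕ → Bool → (Fin Km1 → Bool) → Ω → ℝ)
    (hmeas : ∀ g t d dm, Measurable (po g t d dm))
    (hint : ∀ g t d dm, Integrable (po g t d dm) μ)
    (D1 : Fin G → ℕ → Bool) (Dm : Fin G → ℕ → Fin Km1 → Bool)
    (Y : Fin G → ℕ → Ω → ℝ)
    (hY : ∀ g t ω, Y g t ω = po g t (D1 g t) (Dm g t) ω)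
    (N : Fin G → ℕ → ℝ) (hN : ∀ g t, 0 < N g t)
    (t : ℕ) (ht2 : 2 ≤ t) (htT : t ≤ T)
    (dm : Fin Km1 → Bool)
    (N10 N00 : ℝ)
    (hN10 : N10 = ∑ g, if D1 g t = true ∧ D1 g (t - 1) = false ∧
        Dm g t = dm ∧ Dm g (t - 1) = dm then N g t else 0)
    (hN00 : N00 = ∑ g, if D1 g t = false ∧ D1 g (t - 1) = false ∧
        Dm g t = dm ∧ Dm g (t - 1) = dm then N g t else 0)
    (hN10pos : 0 < N10) (hN00pos : 0 < N00)
    (ψ : ℝ)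
    (hψ : ∀ g, ∫ ω, (po g t false dm ω - po g (t - 1) false dm ω) ∂μ = ψ)
    (DIDplus : Ω → ℝ)
    (hDIDplus : ∀ ω, DIDplus ω =
      (∑ g, if D1 g t = true ∧ D1 g (t - 1) = false ∧
          Dm g t = dm ∧ Dm g (t - 1) = dm then
        N g t / N10 * (Y g t ω - Y g (t - 1) ω) else 0)
      - ∑ g, if D1 g t = false ∧ D1 g (t - 1) = false ∧
          Dm g t = dm ∧ Dm g (t - 1) = dm then
        N g t / N00 * (Y g t ω - Y g (t - 1) ω) else 0) :
    N10 * ∫ ω, DIDplus ω ∂μ =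
      ∑ g, if D1 g t = true ∧ D1 g (t - 1) = false ∧
          Dm g t = dm ∧ Dm g (t - 1) = dm then
        N g t * ∫ ω, (po g t true dm ω - po g t false dm ω) ∂μ else 0 := by

  classical
  have hYint : ∀ g s, Integrable (Y g s) μ := fun g s =>
    (hint g s (D1 g s) (Dm g s)).congr (Filter.Eventually.of_forall fun ω => (hY g s ω).symm)
  have hdint : ∀ g, Integrable (fun ω => Y g t ω - Y g (t - 1) ω) μ :=
    fun g => (hYint g t).sub (hYint g (t - 1))
  set P : Fin G → Prop := fun g => D1 g t = true ∧ D1 g (t - 1) = false ∧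
      Dm g t = dm ∧ Dm g (t - 1) = dm with hP
  set Q : Fin G → Prop := fun g => D1 g t = false ∧ D1 g (t - 1) = false ∧
      Dm g t = dm ∧ Dm g (t - 1) = dm with hQ
  set I : Fin G → ℝ := fun g => ∫ ω, (Y g t ω - Y g (t - 1) ω) ∂μ with hI
  set τ : Fin G → ℝ := fun g => ∫ ω, (po g t true dm ω - po g t false dm ω) ∂μ with hτ
  have h1 : ∫ ω, DIDplus ω ∂μ =
      (∑ g, (if P g then N g t / N10 else 0) * I g)
      - ∑ g, (if Q g then N g t / N00 else 0) * I g := by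
    have e : DIDplus =
        (fun ω => ∑ g, (if P g then N g t / N10 else 0) * (Y g t ω - Y g (t - 1) ω))
        - (fun ω => ∑ g, (if Q g then N g t / N00 else 0) * (Y g t ω - Y g (t - 1) ω)) := by
      funext ω
      simp only [Pi.sub_apply, hDIDplus ω]
      congr 1 <;> refine Finset.sum_congr rfl fun g _ => ?_ <;> split_ifs <;> ring
    rw [e]
    simp only [Pi.sub_apply]
    rw [integral_sub (integrable_finset_sum _ fun g _ => (hdint g).const_mul _)
        (integrable_finset_sum _ fun g _ => (hdint g).const_mul _),
      integral_finset_sum _ fun g _ => (hdint g).const_mul _,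
      integral_finset_sum _ fun g _ => (hdint g).const_mul _]
    simp only [MeasureTheory.integral_const_mul]; rfl
  have hIP : ∀ g, P g → I g = τ g + ψ := by
    rintro g ⟨h1, h2, h3, h4⟩
    have e : (fun ω => Y g t ω - Y g (t - 1) ω)
        = fun ω => (po g t true dm ω - po g t false dm ω)
            + (po g t false dm ω - po g (t - 1) false dm ω) := by
      funext ω; rw [hY, hY, h1, h2, h3, h4]; ring
    show ∫ ω, (Y g t ω - Y g (t - 1) ω) ∂μ = τ g + ψ
    have i1 : Integrable (fun ω => po g t true dm ω - po g t false dm ω) μ :=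
      (hint g t true dm).sub (hint g t false dm)
    have i2 : Integrable (fun ω => po g t false dm ω - po g (t - 1) false dm ω) μ :=
      (hint g t false dm).sub (hint g (t - 1) false dm)
    rw [e, integral_add i1 i2, hψ g]
  have hIQ : ∀ g, Q g → I g = ψ := by
    rintro g ⟨h1, h2, h3, h4⟩
    have e : (fun ω => Y g t ω - Y g (t - 1) ω)
        = fun ω => po g t false dm ω - po g (t - 1) false dm ω := by
      funext ω; rw [hY, hY, h1, h2, h3, h4]
    show ∫ ω, (Y g t ω - Y g (t - 1) ω) ∂μ = ψ
    rw [e, hψ g]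
  have hN10ne : N10 ≠ 0 := ne_of_gt hN10pos
  have hN00ne : N00 ≠ 0 := ne_of_gt hN00pos
  have hA : N10 * ∑ g, (if P g then N g t / N10 else 0) * I g =
      (∑ g, if P g then N g t * τ g else 0) + N10 * ψ := by
    rw [Finset.mul_sum]
    have : ∀ g ∈ Finset.univ, N10 * ((if P g then N g t / N10 else 0) * I g)
        = (if P g then N g t * τ g else 0) + (if P g then N g t else 0) * ψ := by
      intro g _
      split_ifs with h
      · rw [hIP g h]; field_simp
      · ring
    rw [Finset.sum_congr rfl this, Finset.sum_add_distrib, ← Finset.sum_mul, ← hN10]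
  have hB : ∑ g, (if Q g then N g t / N00 else 0) * I g = ψ := by
    have : ∀ g ∈ Finset.univ, (if Q g then N g t / N00 else 0) * I g
        = (if Q g then N g t else 0) / N00 * ψ := by
      intro g _
      split_ifs with h
      · rw [hIQ g h]
      · ring
    rw [Finset.sum_congr rfl this, ← Finset.sum_mul, ← Finset.sum_div, ← hN00,
      div_self hN00ne, one_mul]
  calc N10 * ∫ ω, DIDplus ω ∂μ
      = N10 * ∑ g, (if P g then N g t / N10 else 0) * I g
        - N10 * ∑ g, (if Q g then N g t / N00 else 0) * I g := by rw [h1]; ring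
    _ = ∑ g, if P g then N g t * τ g else 0 := by rw [hA, hB]; ring
end

section
/- Let a_g, b_t > 0 with Σ_{g=1}^G a_g = Σ_{t=1}^T b_t = 1, and define for k∈{1,2}: I^k_g = 1{g ≥ G^k}, J^k_t = 1{t ≥ T^k}, p^k_G = Σ_g a_g I^k_g, p^k_T = Σ_t b_t J^k_t, with 1 < G^1 < G^2 ≤ G, 1 < T^1 < T^2 ≤ T. Define ζ = (1−p^1_G)(1−p^1_T)/((1−p^2_G)(1−p^2_T)) and ε_{g,t} = (I^1_g − p^1_G)(J^1_t − p^1_T) − ζ·(I^2_g − p^2_G)(J^2_t − p^2_T). Then Σ_{g,t} a_g b_t ε_{g,t} I^2_g J^2_t = 0, Σ_t b_t ε_{g,t} = 0 for every g, and Σ_g a_g ε_{g,t} = 0 for every t. -/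
open Finset

lemma aux_lt_one (N K : ℕ) (hK : 1 < K) (hKN : K ≤ N) (w : ℕ → ℝ)
    (hw : ∀ x ∈ Finset.Icc 1 N, 0 < w x) :
    ∑ x ∈ Finset.Icc 1 N, w x * (if K ≤ x then 1 else 0)
      < ∑ x ∈ Finset.Icc 1 N, w x := by
  apply Finset.sum_lt_sum
  · intro i hi
    split_ifs with h
    · simp
    · simpa using (hw i hi).le
  · refine ⟨1, by simp [Finset.mem_Icc]; omega, ?_⟩
    rw [if_neg (by omega)]
    simpa using hw 1 (by simp [Finset.mem_Icc]; omega)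

/-- Algebraic verification that the closed-form residual candidate
`ε_{g,t} = (I¹_g−p¹_G)(J¹_t−p¹_T) − ζ(I²_g−p²_G)(J²_t−p²_T)` with
`ζ = (1−p¹_G)(1−p¹_T)/((1−p²_G)(1−p²_T))` satisfies all the weighted least
squares normal equations: orthogonality to `D²_{g,t}=I²_gJ²_t` and to the group
and time dummies, under weights proportional to `a_g b_t`. -/
theorem closed_form_residual_satisfies_normal_equations
    (G T G1 G2 T1 T2 : ℕ)
    (hG1 : 1 < G1) (hG12 : G1 < G2) (hG2 : G2 ≤ G)
    (hT1 : 1 < T1) (hT12 : T1 < T2) (hT2 : T2 ≤ T)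
    (a b : ℕ → ℝ)
    (ha : ∀ g ∈ Finset.Icc 1 G, 0 < a g) (hb : ∀ t ∈ Finset.Icc 1 T, 0 < b t)
    (hsa : ∑ g ∈ Finset.Icc 1 G, a g = 1) (hsb : ∑ t ∈ Finset.Icc 1 T, b t = 1)
    (I1 I2 J1 J2 : ℕ → ℝ)
    (hI1 : ∀ g, I1 g = if G1 ≤ g then 1 else 0)
    (hI2 : ∀ g, I2 g = if G2 ≤ g then 1 else 0)
    (hJ1 : ∀ t, J1 t = if T1 ≤ t then 1 else 0)
    (hJ2 : ∀ t, J2 t = if T2 ≤ t then 1 else 0)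
    (p1G p2G p1T p2T : ℝ)
    (hp1G : p1G = ∑ g ∈ Finset.Icc 1 G, a g * I1 g)
    (hp2G : p2G = ∑ g ∈ Finset.Icc 1 G, a g * I2 g)
    (hp1T : p1T = ∑ t ∈ Finset.Icc 1 T, b t * J1 t)
    (hp2T : p2T = ∑ t ∈ Finset.Icc 1 T, b t * J2 t)
    (ζ : ℝ) (hζ : ζ = (1 - p1G) * (1 - p1T) / ((1 - p2G) * (1 - p2T)))
    (ε : ℕ → ℕ → ℝ)
    (hε : ∀ g t, ε g t =
      (I1 g - p1G) * (J1 t - p1T) - ζ * ((I2 g - p2G) * (J2 t - p2T))) :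
    (∑ g ∈ Finset.Icc 1 G, ∑ t ∈ Finset.Icc 1 T,
        a g * b t * ε g t * (I2 g * J2 t) = 0)
    ∧ (∀ g ∈ Finset.Icc 1 G, ∑ t ∈ Finset.Icc 1 T, b t * ε g t = 0)
    ∧ (∀ t ∈ Finset.Icc 1 T, ∑ g ∈ Finset.Icc 1 G, a g * ε g t = 0) := by
  have h2G : p2G < 1 := by
    rw [hp2G, ← hsa]
    have := aux_lt_one G G2 (by omega) hG2 a ha
    simpa [hI2] using this
  have h2T : p2T < 1 := by
    rw [hp2T, ← hsb]
    have := aux_lt_one T T2 (by omega) hT2 b hb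
    simpa [hJ2] using this
  have h2G' : (1 : ℝ) - p2G ≠ 0 := by linarith
  have h2T' : (1 : ℝ) - p2T ≠ 0 := by linarith
  have hζ' : ζ * ((1 - p2G) * (1 - p2T)) = (1 - p1G) * (1 - p1T) := by
    rw [hζ]; field_simp
  -- pointwise identities
  have hA1 : ∀ g, (I1 g - p1G) * I2 g = (1 - p1G) * I2 g := by
    intro g; rw [hI1, hI2]
    split_ifs with h h1 h2
    · ring
    · ring
    · exact absurd (le_trans (le_of_lt hG12) h2) h
    · ring
  have hA2 : ∀ g, (I2 g - p2G) * I2 g = (1 - p2G) * I2 g := by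
    intro g; rw [hI2]; split_ifs with h <;> ring
  have hB1 : ∀ t, (J1 t - p1T) * J2 t = (1 - p1T) * J2 t := by
    intro t; rw [hJ1, hJ2]
    split_ifs with h h1 h2
    · ring
    · ring
    · exact absurd (le_trans (le_of_lt hT12) h2) h
    · ring
  have hB2 : ∀ t, (J2 t - p2T) * J2 t = (1 - p2T) * J2 t := by
    intro t; rw [hJ2]; split_ifs with h <;> ring
  refine ⟨?_, ?_, ?_⟩
  · -- orthogonality to D² = I²J²
    have inner : ∀ g, ∑ t ∈ Finset.Icc 1 T, a g * b t * ε g t * (I2 g * J2 t)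
        = (a g * ((I1 g - p1G) * I2 g))
            * (∑ t ∈ Finset.Icc 1 T, b t * ((J1 t - p1T) * J2 t))
          - ζ * ((a g * ((I2 g - p2G) * I2 g))
            * (∑ t ∈ Finset.Icc 1 T, b t * ((J2 t - p2T) * J2 t))) := by
      intro g
      rw [Finset.mul_sum, Finset.mul_sum, Finset.mul_sum, ← Finset.sum_sub_distrib]
      refine Finset.sum_congr rfl fun t _ => ?_
      rw [hε]; ring
    have sB1 : ∑ t ∈ Finset.Icc 1 T, b t * ((J1 t - p1T) * J2 t)
        = (1 - p1T) * p2T := by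
      calc ∑ t ∈ Finset.Icc 1 T, b t * ((J1 t - p1T) * J2 t)
          = ∑ t ∈ Finset.Icc 1 T, (1 - p1T) * (b t * J2 t) :=
            Finset.sum_congr rfl fun t _ => by rw [hB1]; ring
        _ = (1 - p1T) * p2T := by rw [← Finset.mul_sum, ← hp2T]
    have sB2 : ∑ t ∈ Finset.Icc 1 T, b t * ((J2 t - p2T) * J2 t)
        = (1 - p2T) * p2T := by
      calc ∑ t ∈ Finset.Icc 1 T, b t * ((J2 t - p2T) * J2 t)
          = ∑ t ∈ Finset.Icc 1 T, (1 - p2T) * (b t * J2 t) :=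
            Finset.sum_congr rfl fun t _ => by rw [hB2]; ring
        _ = (1 - p2T) * p2T := by rw [← Finset.mul_sum, ← hp2T]
    have outer : ∑ g ∈ Finset.Icc 1 G, ∑ t ∈ Finset.Icc 1 T,
        a g * b t * ε g t * (I2 g * J2 t)
        = (∑ g ∈ Finset.Icc 1 G, a g * ((I1 g - p1G) * I2 g)) * ((1 - p1T) * p2T)
          - ζ * ((∑ g ∈ Finset.Icc 1 G, a g * ((I2 g - p2G) * I2 g))
            * ((1 - p2T) * p2T)) := by
      rw [Finset.sum_mul, Finset.sum_mul, Finset.mul_sum, ← Finset.sum_sub_distrib]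
      refine Finset.sum_congr rfl fun g _ => ?_
      rw [inner g, sB1, sB2]
    have sA1 : ∑ g ∈ Finset.Icc 1 G, a g * ((I1 g - p1G) * I2 g)
        = (1 - p1G) * p2G := by
      calc ∑ g ∈ Finset.Icc 1 G, a g * ((I1 g - p1G) * I2 g)
          = ∑ g ∈ Finset.Icc 1 G, (1 - p1G) * (a g * I2 g) :=
            Finset.sum_congr rfl fun g _ => by rw [hA1]; ring
        _ = (1 - p1G) * p2G := by rw [← Finset.mul_sum, ← hp2G]
    have sA2 : ∑ g ∈ Finset.Icc 1 G, a g * ((I2 g - p2G) * I2 g)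
        = (1 - p2G) * p2G := by
      calc ∑ g ∈ Finset.Icc 1 G, a g * ((I2 g - p2G) * I2 g)
          = ∑ g ∈ Finset.Icc 1 G, (1 - p2G) * (a g * I2 g) :=
            Finset.sum_congr rfl fun g _ => by rw [hA2]; ring
        _ = (1 - p2G) * p2G := by rw [← Finset.mul_sum, ← hp2G]
    rw [outer, sA1, sA2]
    linear_combination (-(p2G * p2T)) * hζ'
  · -- orthogonality to group dummies
    intro g hg
    have key : ∑ t ∈ Finset.Icc 1 T, b t * ε g t
        = ∑ t ∈ Finset.Icc 1 T,
            ((I1 g - p1G) * (b t * J1 t) - ((I1 g - p1G) * p1T) * b t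
              - (ζ * (I2 g - p2G)) * (b t * J2 t)
              + ((ζ * (I2 g - p2G)) * p2T) * b t) :=
      Finset.sum_congr rfl fun t _ => by rw [hε]; ring
    rw [key]
    simp only [Finset.sum_add_distrib, Finset.sum_sub_distrib, ← Finset.mul_sum]
    rw [hsb, ← hp1T, ← hp2T]; ring
  · -- orthogonality to time dummies
    intro t ht
    have key : ∑ g ∈ Finset.Icc 1 G, a g * ε g t
        = ∑ g ∈ Finset.Icc 1 G,
            ((J1 t - p1T) * (a g * I1 g) - ((J1 t - p1T) * p1G) * a g
              - (ζ * (J2 t - p2T)) * (a g * I2 g)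
              + ((ζ * (J2 t - p2T)) * p2G) * a g) :=
      Finset.sum_congr rfl fun g _ => by rw [hε]; ring
    rw [key]
    simp only [Finset.sum_add_distrib, Finset.sum_sub_distrib, ← Finset.mul_sum]
    rw [hsa, ← hp1G, ← hp2G]; ring
end
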